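/- arXiv:1408.0822 — 4 statements merged into one kernel-verified Lean document; each statement's English description precedes it below -/
import Mathlib

section
/- Let X be a Markov chain with finite state space S of size n, and let x and y be any two states. Then for all integers t > n, the probability that the first visit to y occurs exactly at time t satisfies P_x(τ(y) = t) ≤ n/t; consequently P_x(S_t) ≤ n²/t. -/
open Finset

/-- A (row-)stochastic transition matrix: the transition kernel of a Markov chain
on the finite state space `S`. -/
def IsStochastic {S : Type*} [Fintype S] (p : Matrix S S ℝ) : Prop :=
  (∀ a b, 0 ≤ p a b) ∧ ∀ a, ∑ b, p a b = 1

/-- The probability weight of a finite trajectory `z 0, z 1, …, z m` of the chain. -/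
noncomputable def pathWeight {S : Type*} (p : Matrix S S ℝ) {m : ℕ} (z : Fin (m + 1) → S) : ℝ :=
  ∏ i : Fin m, p (z i.castSucc) (z i.succ)

open scoped Classical in
/-- `P_x(A)` for an event `A` depending on the trajectory `X_0, X_1, …, X_m`
of the chain started at `x`. -/
noncomputable def eventProb {S : Type*} [Fintype S] (p : Matrix S S ℝ) (x : S) (m : ℕ)
    (A : (Fin (m + 1) → S) → Prop) : ℝ :=
  ∑ z : Fin (m + 1) → S, if z 0 = x ∧ A z then pathWeight p z else 0

/-- `P_x(τ(y) = t)`: the probability that the chain started at `x` first visits `y`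
exactly at time `t`. -/
noncomputable def hitProbEq {S : Type*} [Fintype S] (p : Matrix S S ℝ) (x y : S) (t : ℕ) : ℝ :=
  eventProb p x t fun z => z (Fin.last t) = y ∧ ∀ i : Fin (t + 1), (i : ℕ) < t → z i ≠ y

/-- `P_x(S_t)`: the probability that the state visited at time `t` was not visited
at any earlier time. -/
noncomputable def surpriseProb {S : Type*} [Fintype S] (p : Matrix S S ℝ) (x : S) (t : ℕ) : ℝ :=
  eventProb p x t fun z => ∀ i : Fin (t + 1), (i : ℕ) < t → z i ≠ z (Fin.last t)

section Aux
open scoped Classical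
variable {S : Type*} [Fintype S] {p : Matrix S S ℝ}

lemma pathWeight_nonneg (hp : IsStochastic p) {m : ℕ} (z : Fin (m + 1) → S) :
    0 ≤ pathWeight p z :=
  Finset.prod_nonneg fun i _ => hp.1 _ _

lemma eventProb_nonneg (hp : IsStochastic p) {x : S} {m : ℕ} {A : (Fin (m + 1) → S) → Prop} :
    0 ≤ eventProb p x m A := by
  refine Finset.sum_nonneg fun z _ => ?_
  split
  · exact pathWeight_nonneg hp z
  · exact le_refl _

lemma eventProb_mono (hp : IsStochastic p) {x : S} {m : ℕ} {A B : (Fin (m + 1) → S) → Prop}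
    (h : ∀ z, A z → B z) : eventProb p x m A ≤ eventProb p x m B := by
  refine Finset.sum_le_sum fun z _ => ?_
  by_cases hz : z 0 = x ∧ A z
  · rw [if_pos hz, if_pos ⟨hz.1, h z hz.2⟩]
  · rw [if_neg hz]
    split
    · exact pathWeight_nonneg hp z
    · exact le_refl _

lemma eventProb_congr {x : S} {m : ℕ} {A B : (Fin (m + 1) → S) → Prop}
    (h : ∀ z, z 0 = x → (A z ↔ B z)) : eventProb p x m A = eventProb p x m B := by
  refine Finset.sum_congr rfl fun z _ => ?_
  by_cases hz : z 0 = x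
  · simp [hz, h z hz]
  · simp [hz]

lemma eventProb_zero {x : S} {A : (Fin 1 → S) → Prop} :
    eventProb p x 0 A = if A (fun _ => x) then 1 else 0 := by
  rw [eventProb, ← (Equiv.funUnique (Fin 1) S).symm.sum_comp
    (fun z => if z 0 = x ∧ A z then pathWeight p z else 0)]
  have : ∀ c : S, ((Equiv.funUnique (Fin 1) S).symm c) = (fun _ : Fin 1 => c) := fun c => rfl
  simp only [this, pathWeight]
  simp [ite_and, Finset.sum_ite_eq']

lemma pathWeight_cons {m : ℕ} (a : S) (u : Fin (m + 1) → S) :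
    pathWeight p (Fin.cons a u) = p a (u 0) * pathWeight p u := by
  rw [pathWeight, Fin.prod_univ_succ]
  simp [← Fin.succ_castSucc, pathWeight]

lemma eventProb_succ {x : S} {m : ℕ} {A : (Fin (m + 2) → S) → Prop} :
    eventProb p x (m + 1) A = ∑ v, p x v * eventProb p v m (fun u => A (Fin.cons x u)) := by
  rw [eventProb, ← (Fin.consEquiv (fun _ : Fin (m + 2) => S)).sum_comp
    (fun z => if z 0 = x ∧ A z then pathWeight p z else 0), Fintype.sum_prod_type]
  have hL : ∀ (a : S) (u : Fin (m + 1) → S),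
      (Fin.consEquiv (fun _ : Fin (m + 2) => S)) (a, u) = Fin.cons a u := fun a u => rfl
  simp only [hL, Fin.cons_zero, pathWeight_cons]
  rw [Finset.sum_comm]
  simp only [eventProb, Finset.mul_sum, mul_ite, mul_zero]
  rw [Finset.sum_comm (s := (univ : Finset S))]
  refine Finset.sum_congr rfl fun u _ => ?_
  rw [Finset.sum_congr rfl (fun a _ => ite_and (a = x) (A (Fin.cons a u))
    (p a (u 0) * pathWeight p u) 0), Finset.sum_ite_eq' univ x
    (fun a => if A (Fin.cons a u) then p a (u 0) * pathWeight p u else 0)]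
  rw [Finset.sum_congr rfl (fun v _ => ite_and (u 0 = v) (A (Fin.cons x u))
    (p x v * pathWeight p u) 0)]
  simp [Finset.sum_ite_eq univ (u 0)]

lemma eventProb_const_and {x : S} {m : ℕ} {Q : Prop} {A : (Fin (m + 1) → S) → Prop} :
    eventProb p x m (fun u => Q ∧ A u) = if Q then eventProb p x m A else 0 := by
  by_cases hQ : Q
  · simp only [hQ, if_true, true_and]
  · simp [eventProb, hQ]

lemma hitProbEq_zero {w y : S} : hitProbEq p w y 0 = if w = y then 1 else 0 := by
  rw [hitProbEq, eventProb_zero]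
  congr 1
  simp

lemma hitProbEq_succ {w y : S} {k : ℕ} :
    hitProbEq p w y (k + 1) = if w = y then 0 else ∑ v, p w v * hitProbEq p v y k := by
  by_cases hw : w = y
  · rw [if_pos hw, hitProbEq, eventProb]
    refine Finset.sum_eq_zero fun z _ => ?_
    rw [if_neg]
    rintro ⟨hz0, _, hforall⟩
    exact hforall 0 (Nat.succ_pos k) (hz0.trans hw)
  · rw [if_neg hw, hitProbEq, eventProb_succ]
    refine Finset.sum_congr rfl fun v _ => ?_
    congr 1
    rw [hitProbEq]
    refine eventProb_congr fun u _ => ?_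
    rw [← Fin.succ_last, Fin.cons_succ]
    constructor
    · rintro ⟨hlast, hs⟩
      refine ⟨hlast, fun j hj => ?_⟩
      have := hs j.succ (by simp; omega)
      rwa [Fin.cons_succ] at this
    · rintro ⟨hlast, hs⟩
      refine ⟨hlast, fun i hi => ?_⟩
      rcases Fin.eq_zero_or_eq_succ i with h0 | ⟨j, hj⟩
      · rw [h0, Fin.cons_zero]; exact hw
      · rw [hj, Fin.cons_succ]
        refine hs j ?_
        rw [hj] at hi
        simpa using Nat.lt_of_succ_lt_succ hi

noncomputable def notHitProb (p : Matrix S S ℝ) (y w : S) (k : ℕ) : ℝ :=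
  eventProb p w k (fun z => ∀ i : Fin (k + 1), z i ≠ y)

lemma notHitProb_zero {y w : S} : notHitProb p y w 0 = if w = y then 0 else 1 := by
  rw [notHitProb, eventProb_zero]
  by_cases hw : w = y <;> simp [hw]

lemma notHitProb_succ {y w : S} {k : ℕ} :
    notHitProb p y w (k + 1) = if w = y then 0 else ∑ v, p w v * notHitProb p y v k := by
  by_cases hw : w = y
  · rw [if_pos hw, notHitProb, eventProb]
    refine Finset.sum_eq_zero fun z _ => ?_
    rw [if_neg]
    rintro ⟨hz0, hforall⟩
    exact hforall 0 (hz0.trans hw)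
  · rw [if_neg hw, notHitProb, eventProb_succ]
    refine Finset.sum_congr rfl fun v _ => ?_
    congr 1
    rw [notHitProb]
    refine eventProb_congr fun u _ => ?_
    constructor
    · intro hs j
      have := hs j.succ
      rwa [Fin.cons_succ] at this
    · intro hs i
      rcases Fin.eq_zero_or_eq_succ i with h0 | ⟨j, hj⟩
      · rw [h0, Fin.cons_zero]; exact hw
      · rw [hj, Fin.cons_succ]; exact hs j

lemma telescope (hp : IsStochastic p) (y : S) :
    ∀ (k : ℕ) (w : S), notHitProb p y w (k + 1) + hitProbEq p w y (k + 1) = notHitProb p y w k := by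
  intro k
  induction k with
  | zero =>
    intro w
    rw [notHitProb_succ, hitProbEq_succ, notHitProb_zero]
    by_cases hw : w = y
    · simp [hw]
    · simp only [hw, if_neg, if_false]
      rw [← Finset.sum_add_distrib]
      have : ∀ v : S, p w v * notHitProb p y v 0 + p w v * hitProbEq p v y 0 = p w v := by
        intro v
        rw [notHitProb_zero, hitProbEq_zero, ← mul_add]
        by_cases hv : v = y <;> simp [hv]
      rw [Finset.sum_congr rfl fun v _ => this v, hp.2 w]
  | succ k ih =>
    intro w
    rw [notHitProb_succ, hitProbEq_succ, notHitProb_succ]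
    by_cases hw : w = y
    · simp [hw]
    · simp only [hw, if_neg, if_false]
      rw [← Finset.sum_add_distrib]
      exact Finset.sum_congr rfl fun v _ => by rw [← mul_add, ih v]

lemma hit_sum_le (hp : IsStochastic p) (y w : S) (K : ℕ) :
    ∑ k ∈ Finset.range K, hitProbEq p w y (k + 1) ≤ 1 := by
  have key : ∀ K, notHitProb p y w K + ∑ k ∈ Finset.range K, hitProbEq p w y (k + 1)
      = notHitProb p y w 0 := by
    intro K
    induction K with
    | zero => simp
    | succ K ih =>
      rw [Finset.sum_range_succ]
      have tel := telescope hp y K w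
      linarith
  have h0 : notHitProb p y w 0 ≤ 1 := by
    rw [notHitProb_zero]; split <;> norm_num
  have hK : 0 ≤ notHitProb p y w K := eventProb_nonneg hp
  have := key K
  linarith

lemma pow_stochastic (hp : IsStochastic p) : ∀ s : ℕ, IsStochastic (p ^ s) := by
  intro s
  induction s with
  | zero =>
    rw [pow_zero]
    constructor
    · intro a b
      rw [Matrix.one_apply]
      split <;> norm_num
    · intro a
      simp [Matrix.one_apply]
  | succ s ih =>
    rw [pow_succ]
    constructor
    · intro a b
      rw [Matrix.mul_apply]
      exact Finset.sum_nonneg fun c _ => mul_nonneg (ih.1 a c) (hp.1 c b)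
    · intro a
      simp only [Matrix.mul_apply]
      rw [Finset.sum_comm]
      have : ∀ c : S, ∑ b, (p ^ s) a c * p c b = (p ^ s) a c := by
        intro c
        rw [← Finset.mul_sum, hp.2 c, mul_one]
      rw [Finset.sum_congr rfl fun c _ => this c, ih.2 a]

lemma pow_entry_le_one (hp : IsStochastic p) (s : ℕ) (x w : S) : (p ^ s) x w ≤ 1 := by
  have h := pow_stochastic hp s
  calc (p ^ s) x w ≤ ∑ b, (p ^ s) x b :=
        Finset.single_le_sum (fun b _ => h.1 x b) (Finset.mem_univ w)
    _ = 1 := h.2 x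

lemma split_lemma (hp : IsStochastic p) (y : S) (k : ℕ) :
    ∀ (s : ℕ) (x : S),
      eventProb p x (k + s) (fun z => z (Fin.last (k + s)) = y ∧
        ∀ i : Fin (k + s + 1), s ≤ (i : ℕ) → (i : ℕ) < k + s → z i ≠ y)
      = ∑ w, (p ^ s) x w * hitProbEq p w y k := by
  intro s
  induction s with
  | zero =>
    intro x
    rw [pow_zero]
    have h1 : eventProb p x (k + 0) (fun z => z (Fin.last (k + 0)) = y ∧
        ∀ i : Fin (k + 0 + 1), 0 ≤ (i : ℕ) → (i : ℕ) < k + 0 → z i ≠ y)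
        = hitProbEq p x y k := by
      rw [hitProbEq]
      exact eventProb_congr fun z _ => by
        constructor
        · rintro ⟨h1, h2⟩; exact ⟨h1, fun i hi => h2 i (Nat.zero_le _) hi⟩
        · rintro ⟨h1, h2⟩; exact ⟨h1, fun i _ hi => h2 i hi⟩
    rw [h1]
    simp [Matrix.one_apply, ite_mul]
  | succ s ih =>
    intro x
    show eventProb p x ((k + s) + 1) _ = _
    rw [eventProb_succ]
    have inner : ∀ v : S,
        eventProb p v (k + s) (fun u =>
          (Fin.cons x u : Fin (k + (s + 1) + 1) → S) (Fin.last (k + (s + 1))) = y ∧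
          ∀ i : Fin (k + (s + 1) + 1), s + 1 ≤ (i : ℕ) → (i : ℕ) < k + (s + 1) →
            (Fin.cons x u : Fin (k + (s + 1) + 1) → S) i ≠ y)
        = ∑ w, (p ^ s) v w * hitProbEq p w y k := by
      intro v
      rw [← ih v]
      refine eventProb_congr fun u _ => ?_
      have hlast : (Fin.cons x u : Fin (k + (s + 1) + 1) → S) (Fin.last (k + (s + 1)))
          = u (Fin.last (k + s)) := by
        rw [show Fin.last (k + (s + 1)) = (Fin.last (k + s)).succ from rfl, Fin.cons_succ]
      rw [hlast]
      constructor
      · rintro ⟨h1, h2⟩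
        refine ⟨h1, fun j hj1 hj2 => ?_⟩
        have := h2 j.succ (by simp; omega) (by simp; omega)
        rwa [Fin.cons_succ] at this
      · rintro ⟨h1, h2⟩
        refine ⟨h1, fun i hi1 hi2 => ?_⟩
        rcases Fin.eq_zero_or_eq_succ i with h0 | ⟨j, hj⟩
        · rw [h0] at hi1; simp at hi1
        · rw [hj, Fin.cons_succ]
          rw [hj] at hi1 hi2
          simp only [Fin.val_succ] at hi1 hi2
          exact h2 j (by omega) (by omega)
    simp only [inner]
    rw [pow_succ']
    simp only [Matrix.mul_apply, Finset.sum_mul, Finset.mul_sum]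
    rw [Finset.sum_comm]
    exact Finset.sum_congr rfl fun v _ => Finset.sum_congr rfl fun w _ => by ring

lemma hit_bound (hp : IsStochastic p) (x y : S) (t : ℕ) (htpos : 0 < t) :
    hitProbEq p x y t ≤ (Fintype.card S : ℝ) / t := by
  have step : ∀ s ∈ Finset.range t, hitProbEq p x y t ≤ ∑ w, hitProbEq p w y (t - s) := by
    intro s hs
    rw [Finset.mem_range] at hs
    obtain ⟨k, rfl⟩ : ∃ k, t = k + s := ⟨t - s, by omega⟩
    calc hitProbEq p x y (k + s)
        ≤ eventProb p x (k + s) (fun z => z (Fin.last (k + s)) = y ∧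
            ∀ i : Fin (k + s + 1), s ≤ (i : ℕ) → (i : ℕ) < k + s → z i ≠ y) := by
          rw [hitProbEq]
          exact eventProb_mono hp fun z hz => ⟨hz.1, fun i _ hi => hz.2 i hi⟩
      _ = ∑ w, (p ^ s) x w * hitProbEq p w y k := split_lemma hp y k s x
      _ ≤ ∑ w, hitProbEq p w y k := by
          refine Finset.sum_le_sum fun w _ => ?_
          have h1 := pow_entry_le_one hp s x w
          have h2 : 0 ≤ hitProbEq p w y k := eventProb_nonneg hp
          nlinarith [(pow_stochastic hp s).1 x w]
      _ = ∑ w, hitProbEq p w y (k + s - s) := by rw [Nat.add_sub_cancel]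
  have sumstep : (t : ℝ) * hitProbEq p x y t ≤ (Fintype.card S : ℝ) := by
    calc (t : ℝ) * hitProbEq p x y t = ∑ _s ∈ Finset.range t, hitProbEq p x y t := by
          rw [Finset.sum_const, Finset.card_range, nsmul_eq_mul]
      _ ≤ ∑ s ∈ Finset.range t, ∑ w, hitProbEq p w y (t - s) := Finset.sum_le_sum step
      _ = ∑ w, ∑ s ∈ Finset.range t, hitProbEq p w y (t - s) := Finset.sum_comm
      _ ≤ ∑ _w : S, (1 : ℝ) := by
          refine Finset.sum_le_sum fun w _ => ?_
          have hre : ∑ s ∈ Finset.range t, hitProbEq p w y (t - s)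
              = ∑ s ∈ Finset.range t, hitProbEq p w y (s + 1) := by
            rw [← Finset.sum_range_reflect (fun s => hitProbEq p w y (s + 1)) t]
            refine Finset.sum_congr rfl fun s hs => ?_
            rw [Finset.mem_range] at hs
            congr 1
            omega
          rw [hre]
          exact hit_sum_le hp y w t
      _ = (Fintype.card S : ℝ) := by simp
  have htr : (0 : ℝ) < (t : ℝ) := by exact_mod_cast htpos
  rw [le_div_iff₀ htr]
  linarith

lemma surprise_eq (x : S) (t : ℕ) :
    surpriseProb p x t = ∑ y : S, hitProbEq p x y t := by
  rw [surpriseProb]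
  simp only [hitProbEq, eventProb]
  rw [Finset.sum_comm]
  refine Finset.sum_congr rfl fun z _ => ?_
  rw [Finset.sum_eq_single (z (Fin.last t))]
  · simp
  · intro y _ hy
    rw [if_neg]
    rintro ⟨_, h2, _⟩
    exact hy h2.symm
  · intro h
    exact absurd (Finset.mem_univ _) h

end Aux


/-- Proposition 1: for any Markov chain on `n` states and any states `x, y`,
for `t > n` we have `P_x(τ(y) = t) ≤ n / t` and `P_x(S_t) ≤ n² / t`. -/
theorem surprise_bound_general {S : Type*} [Fintype S] (p : Matrix S S ℝ)
    (hp : IsStochastic p) (x y : S) (t : ℕ) (ht : Fintype.card S < t) :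
    hitProbEq p x y t ≤ (Fintype.card S : ℝ) / t ∧
      surpriseProb p x t ≤ (Fintype.card S : ℝ) ^ 2 / t := by
  have hcard : 1 ≤ Fintype.card S := Fintype.card_pos_iff.mpr ⟨x⟩
  have htpos : 0 < t := by omega
  refine ⟨hit_bound hp x y t htpos, ?_⟩
  calc surpriseProb p x t = ∑ y' : S, hitProbEq p x y' t := surprise_eq x t
    _ ≤ ∑ _y' : S, (Fintype.card S : ℝ) / t :=
        Finset.sum_le_sum fun y' _ => hit_bound hp x y' t htpos
    _ = (Fintype.card S : ℝ) ^ 2 / t := by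
        rw [Finset.sum_const, Finset.card_univ, nsmul_eq_mul]
        ring
end

section
/- Let X be a reversible Markov chain with finite state space S and stationary distribution π. Then for any state x with π(x) > 0, the sum over all states y of the maximal transition probability p*(x, y) satisfies Σ_{y ∈ S} p*(x, y) ≤ 2e · max(1, log(1/π(x))). -/
open Finset

/-- `π` is a stationary distribution for the transition matrix `p`. -/
def IsStationaryDistribution {S : Type*} [Fintype S] (p : Matrix S S ℝ) (π : S → ℝ) : Prop :=
  (∀ a, 0 ≤ π a) ∧ (∑ a, π a = 1) ∧ ∀ b, ∑ a, π a * p a b = π b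

/-- The chain with transition matrix `p` is reversible with respect to `π`. -/
def IsReversible {S : Type*} [Fintype S] (p : Matrix S S ℝ) (π : S → ℝ) : Prop :=
  ∀ a b, π a * p a b = π b * p b a

/-- `p*(x, y) = sup_{t ≥ 0} p^t(x, y)`, the maximal transition probability from `x` to `y`. -/
noncomputable def maxProb {S : Type*} [Fintype S] [DecidableEq S]
    (p : Matrix S S ℝ) (x y : S) : ℝ :=
  ⨆ t : ℕ, (p ^ t) x y

set_option linter.unusedSectionVars false
set_option maxHeartbeats 1000000

section MC
variable {S : Type*} [Fintype S] [DecidableEq S]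

/-- one-step transfer operator -/
noncomputable def Pop (p : Matrix S S ℝ) (g : S → ℝ) : S → ℝ := fun z => ∑ w, p z w * g w

/-- n-step transfer operator -/
noncomputable def Pit (p : Matrix S S ℝ) (g : S → ℝ) (m : ℕ) : S → ℝ :=
  fun z => ∑ w, (p ^ m) z w * g w

lemma pow_entry_nonneg {p : Matrix S S ℝ} (hp0 : ∀ a b, 0 ≤ p a b) (m : ℕ) (a b : S) :
    0 ≤ (p ^ m) a b := by
  induction m generalizing a b with
  | zero => simp [Matrix.one_apply]; split <;> norm_num
  | succ n ih =>
    rw [pow_succ, Matrix.mul_apply]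
    exact Finset.sum_nonneg fun c _ => mul_nonneg (ih a c) (hp0 c b)

lemma pow_rowsum {p : Matrix S S ℝ} (hrow : ∀ a, ∑ b, p a b = 1) (m : ℕ) (a : S) :
    ∑ b, (p ^ m) a b = 1 := by
  induction m generalizing a with
  | zero => simp [Matrix.one_apply]
  | succ n ih =>
    simp only [pow_succ, Matrix.mul_apply]
    rw [Finset.sum_comm]
    calc ∑ c, ∑ b, (p ^ n) a c * p c b = ∑ c, (p ^ n) a c * ∑ b, p c b := by
          simp [Finset.mul_sum]
      _ = 1 := by simp [hrow, ih a]

lemma pow_entry_le_one_s5 {p : Matrix S S ℝ} (hp0 : ∀ a b, 0 ≤ p a b)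
    (hrow : ∀ a, ∑ b, p a b = 1) (m : ℕ) (a b : S) : (p ^ m) a b ≤ 1 := by
  calc (p ^ m) a b ≤ ∑ c, (p ^ m) a c :=
        Finset.single_le_sum (fun c _ => pow_entry_nonneg hp0 m a c) (Finset.mem_univ b)
    _ = 1 := pow_rowsum hrow m a

lemma pow_rev {p : Matrix S S ℝ} {π : S → ℝ} (hrev : ∀ a b, π a * p a b = π b * p b a)
    (m : ℕ) (a b : S) : π a * (p ^ m) a b = π b * (p ^ m) b a := by
  induction m generalizing a b with
  | zero =>
    by_cases h : a = b
    · subst h; rfl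
    · simp [Matrix.one_apply, h, Ne.symm h]
  | succ n ih =>
    conv_lhs => rw [pow_succ]
    conv_rhs => rw [pow_succ']
    simp only [Matrix.mul_apply, Finset.mul_sum]
    refine Finset.sum_congr rfl fun c _ => ?_
    calc π a * ((p ^ n) a c * p c b) = (π a * (p ^ n) a c) * p c b := by ring
      _ = (π c * (p ^ n) c a) * p c b := by rw [ih]
      _ = (π c * p c b) * (p ^ n) c a := by ring
      _ = (π b * p b c) * (p ^ n) c a := by rw [hrev c b]
      _ = π b * (p b c * (p ^ n) c a) := by ring

lemma Pit_zero (p : Matrix S S ℝ) (g : S → ℝ) : Pit p g 0 = g := by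
  funext z; simp [Pit, Matrix.one_apply]

lemma Pit_succ (p : Matrix S S ℝ) (g : S → ℝ) (m : ℕ) :
    Pit p g (m + 1) = Pop p (Pit p g m) := by
  funext z
  simp only [Pit, Pop, pow_succ', Matrix.mul_apply, Finset.sum_mul, Finset.mul_sum,
    mul_assoc]
  rw [Finset.sum_comm]

lemma Pit_succ' (p : Matrix S S ℝ) (g : S → ℝ) (m : ℕ) :
    Pit p g (m + 1) = Pit p (Pop p g) m := by
  funext z
  simp only [Pit, Pop, pow_succ, Matrix.mul_apply, Finset.sum_mul, Finset.mul_sum,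
    mul_assoc]
  rw [Finset.sum_comm]

lemma Pit_nonneg {p : Matrix S S ℝ} (hp0 : ∀ a b, 0 ≤ p a b) {g : S → ℝ}
    (hg : ∀ z, 0 ≤ g z) (m : ℕ) (z : S) : 0 ≤ Pit p g m z :=
  Finset.sum_nonneg fun w _ => mul_nonneg (pow_entry_nonneg hp0 m z w) (hg w)

lemma sum_pi_Pop {p : Matrix S S ℝ} {π : S → ℝ}
    (hstatn : ∀ b, ∑ a, π a * p a b = π b) (h : S → ℝ) :
    ∑ z, π z * Pop p h z = ∑ z, π z * h z := by
  simp only [Pop, Finset.mul_sum]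
  rw [Finset.sum_comm]
  refine Finset.sum_congr rfl fun w _ => ?_
  simp only [← mul_assoc]
  rw [← Finset.sum_mul, hstatn w]
  
lemma sum_pi_Pit {p : Matrix S S ℝ} {π : S → ℝ}
    (hstatn : ∀ b, ∑ a, π a * p a b = π b) (g : S → ℝ) (m : ℕ) :
    ∑ z, π z * Pit p g m z = ∑ z, π z * g z := by
  induction m with
  | zero => rw [Pit_zero]
  | succ n ih => rw [Pit_succ, sum_pi_Pop hstatn, ih]

end MC

section MC2
variable {S : Type*} [Fintype S] [DecidableEq S]

/-- transfer recursion for product observables, general initial measure -/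
noncomputable def crun (p : Matrix S S ℝ) (φ : ℕ → S → ℝ) (μ : S → ℝ) : ℕ → S → ℝ
  | 0 => fun z => μ z * φ 0 z
  | n + 1 => fun z => (∑ a, crun p φ μ n a * p a z) * φ (n + 1) z

/-- transfer recursion normalized by stationary measure -/
noncomputable def hrun (p : Matrix S S ℝ) (φ : ℕ → S → ℝ) : ℕ → S → ℝ
  | 0 => φ 0
  | n + 1 => fun z => (∑ w, p z w * hrun p φ n w) * φ (n + 1) z

/-- path-space expectation: paths of length T (T+1 states), initial measure μ -/
noncomputable def pathE (p : Matrix S S ℝ) (T : ℕ) (μ : S → ℝ)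
    (F : (Fin (T + 1) → S) → ℝ) : ℝ :=
  ∑ ω : Fin (T + 1) → S,
    (μ (ω 0) * ∏ i : Fin T, p (ω i.castSucc) (ω i.succ)) * F ω

lemma crun_succ_front (p : Matrix S S ℝ) (φ : ℕ → S → ℝ) (μ : S → ℝ) (n : ℕ) (u : S) :
    crun p φ μ (n + 1) u
      = ∑ z, crun p (fun m => φ (m + 1)) (fun v => μ z * φ 0 z * p z v) n u := by
  induction n generalizing u with
  | zero =>
    simp only [crun, Finset.sum_mul]
  | succ n ih =>
    show (∑ a, crun p φ μ (n + 1) a * p a u) * φ (n + 2) u = _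
    simp only [ih]
    have hr : ∀ z, crun p (fun m => φ (m + 1)) (fun v => μ z * φ 0 z * p z v) (n + 1) u
        = (∑ a, crun p (fun m => φ (m + 1)) (fun v => μ z * φ 0 z * p z v) n a * p a u)
          * φ (n + 2) u := fun z => rfl
    simp only [hr]
    rw [← Finset.sum_mul]
    congr 1
    simp only [Finset.sum_mul]
    rw [Finset.sum_comm]

/-- product-observable evaluation of path expectations -/
lemma pathE_prod (p : Matrix S S ℝ) (T : ℕ) (μ : S → ℝ) (φ : ℕ → S → ℝ) :
    pathE p T μ (fun ω => ∏ m : Fin (T + 1), φ m.1 (ω m)) = ∑ z, crun p φ μ T z := by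
  induction T generalizing μ φ with
  | zero =>
    rw [pathE]
    rw [← (Equiv.funUnique (Fin 1) S).symm.sum_comp]
    simp [crun, Equiv.funUnique]
  | succ T ih =>
    rw [pathE]
    rw [← Equiv.sum_comp (Fin.consEquiv (fun _ : Fin (T + 2) => S))]
    rw [Fintype.sum_prod_type]
    have key : ∀ (z : S) (ω' : Fin (T + 1) → S),
        (μ ((Fin.cons z ω' : Fin (T + 2) → S) 0) *
          ∏ i : Fin (T + 1), p ((Fin.cons z ω' : Fin (T + 2) → S) i.castSucc)
            ((Fin.cons z ω' : Fin (T + 2) → S) i.succ)) *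
          ∏ m : Fin (T + 2), φ m.1 ((Fin.cons z ω' : Fin (T + 2) → S) m)
        = ((μ z * φ 0 z * p z (ω' 0)) * ∏ i : Fin T, p (ω' i.castSucc) (ω' i.succ)) *
            ∏ m : Fin (T + 1), φ (m.1 + 1) (ω' m) := by
      intro z ω'
      rw [Fin.prod_univ_succ, Fin.prod_univ_succ]
      simp only [Fin.cons_zero, Fin.cons_succ, Fin.castSucc_zero, Fin.val_succ,
        ← Fin.succ_castSucc, Fin.val_zero]
      ring
    calc ∑ z, ∑ ω' : Fin (T+1) → S, _ = ∑ z, pathE p T (fun v => μ z * φ 0 z * p z v)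
          (fun ω => ∏ m : Fin (T + 1), (fun m => φ (m + 1)) m.1 (ω m)) := by
            refine Finset.sum_congr rfl fun z _ => ?_
            rw [pathE]
            exact Finset.sum_congr rfl fun ω' _ => key z ω'
      _ = ∑ z, ∑ u, crun p (fun m => φ (m + 1)) (fun v => μ z * φ 0 z * p z v) T u := by
            exact Finset.sum_congr rfl fun z _ =>
              ih (fun v => μ z * φ 0 z * p z v) (fun m => φ (m + 1))
      _ = ∑ u, crun p φ μ (T + 1) u := by
            rw [Finset.sum_comm]
            exact Finset.sum_congr rfl fun u _ => (crun_succ_front p φ μ T u).symm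

lemma crun_pi {p : Matrix S S ℝ} {π : S → ℝ}
    (hrev : ∀ a b, π a * p a b = π b * p b a) (φ : ℕ → S → ℝ) (n : ℕ) (z : S) :
    crun p φ π n z = π z * hrun p φ n z := by
  induction n generalizing z with
  | zero => rfl
  | succ n ih =>
    show (∑ a, crun p φ π n a * p a z) * φ (n + 1) z = π z * ((∑ w, p z w * hrun p φ n w) * φ (n+1) z)
    have : ∑ a, crun p φ π n a * p a z = π z * ∑ w, p z w * hrun p φ n w := by
      rw [Finset.mul_sum]
      refine Finset.sum_congr rfl fun a _ => ?_
      rw [ih a]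
      calc π a * hrun p φ n a * p a z = (π a * p a z) * hrun p φ n a := by ring
        _ = (π z * p z a) * hrun p φ n a := by rw [hrev]
        _ = π z * (p z a * hrun p φ n a) := by ring
    rw [this]; ring

lemma pathE_prod_pi {p : Matrix S S ℝ} {π : S → ℝ}
    (hrev : ∀ a b, π a * p a b = π b * p b a) (T : ℕ) (φ : ℕ → S → ℝ) :
    pathE p T π (fun ω => ∏ m : Fin (T + 1), φ m.1 (ω m))
      = ∑ z, π z * hrun p φ T z := by
  rw [pathE_prod]
  exact Finset.sum_congr rfl fun z _ => crun_pi hrev φ T z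

end MC2

/-- key discrete maximal-function estimate: from the weak-type inequality one gets
`E[(M-1)⁺] ≤ E[G · log⁺ M]`. -/
lemma valueInduction {Ω : Type*} [Fintype Ω] (w G : Ω → ℝ)
    (hw : ∀ ω, 0 ≤ w ω) (hG : ∀ ω, 0 ≤ G ω) (M : Ω → ℝ)
    (H : ∀ lam : ℝ, 1 ≤ lam →
      lam * ∑ ω ∈ Finset.univ.filter (fun ω => lam ≤ M ω), w ω
        ≤ ∑ ω ∈ Finset.univ.filter (fun ω => lam ≤ M ω), w ω * G ω) :
    ∑ ω, w ω * max (M ω - 1) 0 ≤ ∑ ω, w ω * G ω * max (Real.log (M ω)) 0 := by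
  classical
  -- strong induction on the number of values exceeding 1
  suffices key : ∀ N : ℕ, ∀ M : Ω → ℝ,
      (∀ lam : ℝ, 1 ≤ lam →
        lam * ∑ ω ∈ Finset.univ.filter (fun ω => lam ≤ M ω), w ω
          ≤ ∑ ω ∈ Finset.univ.filter (fun ω => lam ≤ M ω), w ω * G ω) →
      ((Finset.univ.image M).filter (fun v => 1 < v)).card ≤ N →
      ∑ ω, w ω * max (M ω - 1) 0 ≤ ∑ ω, w ω * G ω * max (Real.log (M ω)) 0 by
    exact key _ M H le_rfl
  intro N
  induction N with
  | zero =>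
    intro M _ hcard
    have hemp : (Finset.univ.image M).filter (fun v => 1 < v) = ∅ :=
      Finset.card_eq_zero.mp (Nat.le_zero.mp hcard)
    have hM1 : ∀ ω, M ω ≤ 1 := by
      intro ω
      by_contra h
      push_neg at h
      have : M ω ∈ (Finset.univ.image M).filter (fun v => 1 < v) :=
        Finset.mem_filter.mpr ⟨Finset.mem_image_of_mem M (Finset.mem_univ ω), h⟩
      rw [hemp] at this
      exact absurd this (Finset.notMem_empty _)
    have hL : ∀ ω, w ω * max (M ω - 1) 0 = 0 := by
      intro ω
      rw [max_eq_right (by linarith [hM1 ω])]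
      ring
    rw [Finset.sum_congr rfl fun ω _ => hL ω]
    rw [Finset.sum_const_zero]
    exact Finset.sum_nonneg fun ω _ =>
      mul_nonneg (mul_nonneg (hw ω) (hG ω)) (le_max_right _ _)
  | succ N ihN =>
    intro M hH hcard
    set V := (Finset.univ.image M).filter (fun v => 1 < v) with hV
    rcases Finset.eq_empty_or_nonempty V with hVe | hVne
    · exact ihN M hH (by rw [← hV, hVe]; simp)
    · set μmax := V.max' hVne with hμmax
      have hμmaxV : μmax ∈ V := V.max'_mem hVne
      have hμmax1 : 1 < μmax := (Finset.mem_filter.mp hμmaxV).2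
      -- second largest value (or 1)
      set μ' : ℝ := if h : (V.erase μmax).Nonempty then max ((V.erase μmax).max' h) 1 else 1
        with hμ'
      have hμ'1 : 1 ≤ μ' := by
        rw [hμ']; split
        · exact le_max_right _ _
        · exact le_rfl
      have hμ'lt : μ' < μmax := by
        rw [hμ']; split
        · rename_i h
          apply max_lt _ hμmax1
          have hmem := (V.erase μmax).max'_mem h
          have hne := (Finset.mem_erase.mp hmem).1
          have hle := V.le_max' _ (Finset.mem_erase.mp hmem).2
          exact lt_of_le_of_ne hle hne
        · exact hμmax1
      -- all values of M other than μmax that exceed μ' do not exist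
      have hgap : ∀ ω, μ' < M ω → M ω = μmax := by
        intro ω h
        by_contra hne
        have hMV : M ω ∈ V := Finset.mem_filter.mpr
          ⟨Finset.mem_image_of_mem M (Finset.mem_univ ω), lt_of_le_of_lt hμ'1 h⟩
        have hMe : M ω ∈ V.erase μmax := Finset.mem_erase.mpr ⟨hne, hMV⟩
        have hne2 : (V.erase μmax).Nonempty := ⟨_, hMe⟩
        have : M ω ≤ μ' := by
          rw [hμ', dif_pos hne2]
          exact le_max_of_le_left ((V.erase μmax).le_max' _ hMe)
        linarith
      set M' := fun ω => min (M ω) μ' with hM'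
      -- induction hypothesis applies to M'
      have hH' : ∀ lam : ℝ, 1 ≤ lam →
          lam * ∑ ω ∈ Finset.univ.filter (fun ω => lam ≤ M' ω), w ω
            ≤ ∑ ω ∈ Finset.univ.filter (fun ω => lam ≤ M' ω), w ω * G ω := by
        intro lam hlam
        by_cases hl : lam ≤ μ'
        · have : Finset.univ.filter (fun ω => lam ≤ M' ω)
              = Finset.univ.filter (fun ω => lam ≤ M ω) := by
            apply Finset.filter_congr
            intro ω _
            simp only [hM', le_min_iff, eq_iff_iff]
            constructor
            · exact fun h => h.1
            · exact fun h => ⟨h, hl⟩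
          rw [this]
          exact hH lam hlam
        · have : Finset.univ.filter (fun ω => lam ≤ M' ω) = ∅ := by
            apply Finset.filter_false_of_mem
            intro ω _
            push_neg at hl ⊢
            exact lt_of_le_of_lt (min_le_right _ _) hl
          rw [this]
          simp
      have hcard' : ((Finset.univ.image M').filter (fun v => 1 < v)).card ≤ N := by
        have hsub : (Finset.univ.image M').filter (fun v => 1 < v) ⊆ V.erase μmax := by
          intro v hv
          obtain ⟨hvim, hv1⟩ := Finset.mem_filter.mp hv
          obtain ⟨ω, _, hωv⟩ := Finset.mem_image.mp hvim
          have hvle : v ≤ μ' := by rw [← hωv]; exact min_le_right _ _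
          have hvne : v ≠ μmax := fun h => by rw [h] at hvle; linarith
          have : M' ω = M ω ∨ M' ω = μ' := by
            rcases min_cases (M ω) μ' with ⟨h1, _⟩ | ⟨h1, _⟩
            · exact Or.inl h1
            · exact Or.inr h1
          rcases this with h1 | h1
          · refine Finset.mem_erase.mpr ⟨hvne, Finset.mem_filter.mpr ⟨?_, hv1⟩⟩
            rw [← hωv, h1]; exact Finset.mem_image_of_mem M (Finset.mem_univ ω)
          · -- v = μ' and 1 < μ', hence μ' is the max of the erase set
            have hveq : v = μ' := by rw [← hωv, h1]
            rw [hveq] at hv1 ⊢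
            rw [hμ'] at hv1 ⊢
            by_cases h2 : (V.erase μmax).Nonempty
            · rw [dif_pos h2] at hv1 ⊢
              have : 1 < (V.erase μmax).max' h2 := by
                rcases max_cases ((V.erase μmax).max' h2) (1 : ℝ) with ⟨he, _⟩ | ⟨he, hle⟩
                · rwa [he] at hv1
                · rw [he] at hv1; linarith
              rw [max_eq_left (le_of_lt this)]
              exact (V.erase μmax).max'_mem h2
            · rw [dif_neg h2] at hv1; linarith
        calc ((Finset.univ.image M').filter (fun v => 1 < v)).card
            ≤ (V.erase μmax).card := Finset.card_le_card hsub
          _ ≤ N := by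
              have := Finset.card_erase_of_mem hμmaxV
              rw [this]
              omega
      have hIH := ihN M' hH' hcard'
      have hμmaxpos : (0:ℝ) < μmax := by linarith
      have hμ'pos : (0:ℝ) < μ' := by linarith
      -- pointwise decompositions
      have hMcase : ∀ ω, ¬ μmax ≤ M ω → M' ω = M ω := by
        intro ω h
        push_neg at h
        have hMle : M ω ≤ μ' := by
          by_contra hc
          push_neg at hc
          exact absurd (hgap ω hc) (by intro he; rw [he] at h; exact lt_irrefl _ h)
        exact min_eq_left hMle
      have hLdec : ∀ ω, w ω * max (M ω - 1) 0
          = w ω * max (M' ω - 1) 0 + (if μmax ≤ M ω then w ω * (μmax - μ') else 0) := by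
        intro ω
        by_cases h : μmax ≤ M ω
        · have hM : M ω = μmax := hgap ω (lt_of_lt_of_le hμ'lt h)
          have hM'e : M' ω = μ' := min_eq_right (by rw [hM]; linarith)
          rw [if_pos h, hM, hM'e, max_eq_left (by linarith), max_eq_left (by linarith)]
          ring
        · rw [if_neg h, hMcase ω h]; ring
      have hRdec : ∀ ω, w ω * G ω * max (Real.log (M ω)) 0
          = w ω * G ω * max (Real.log (M' ω)) 0
            + (if μmax ≤ M ω then w ω * G ω * (Real.log μmax - Real.log μ') else 0) := by
        intro ω
        by_cases h : μmax ≤ M ω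
        · have hM : M ω = μmax := hgap ω (lt_of_lt_of_le hμ'lt h)
          have hM'e : M' ω = μ' := min_eq_right (by rw [hM]; linarith)
          rw [if_pos h, hM, hM'e,
            max_eq_left (Real.log_nonneg (le_of_lt hμmax1)),
            max_eq_left (Real.log_nonneg hμ'1)]
          ring
        · rw [if_neg h, hMcase ω h]; ring
      set W := ∑ ω ∈ Finset.univ.filter (fun ω => μmax ≤ M ω), w ω with hW
      set R := ∑ ω ∈ Finset.univ.filter (fun ω => μmax ≤ M ω), w ω * G ω with hR
      have hWnn : 0 ≤ W := Finset.sum_nonneg fun ω _ => hw ω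
      have hRnn : 0 ≤ R := Finset.sum_nonneg fun ω _ => mul_nonneg (hw ω) (hG ω)
      have hweak : μmax * W ≤ R := hH μmax (le_of_lt hμmax1)
      have hstep : (μmax - μ') * W ≤ (Real.log μmax - Real.log μ') * R := by
        have h1 : (μmax - μ') * W = (1 - μ' / μmax) * (μmax * W) := by
          field_simp
        have h2 : (1 - μ' / μmax) * (μmax * W) ≤ (1 - μ' / μmax) * R := by
          apply mul_le_mul_of_nonneg_left hweak
          have : μ' / μmax ≤ 1 := by
            rw [div_le_one hμmaxpos]; linarith
          linarith
        have h3 : 1 - μ' / μmax ≤ Real.log μmax - Real.log μ' := by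
          have hlog := Real.log_le_sub_one_of_pos (div_pos hμ'pos hμmaxpos)
          rw [Real.log_div (ne_of_gt hμ'pos) (ne_of_gt hμmaxpos)] at hlog
          linarith
        have h4 : (1 - μ' / μmax) * R ≤ (Real.log μmax - Real.log μ') * R :=
          mul_le_mul_of_nonneg_right h3 hRnn
        linarith
      -- assemble
      calc ∑ ω, w ω * max (M ω - 1) 0
          = ∑ ω, w ω * max (M' ω - 1) 0 + (μmax - μ') * W := by
            rw [Finset.sum_congr rfl fun ω _ => hLdec ω, Finset.sum_add_distrib]
            congr 1
            rw [← Finset.sum_filter, hW, Finset.mul_sum]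
            exact Finset.sum_congr rfl fun ω _ => mul_comm _ _
        _ ≤ ∑ ω, w ω * G ω * max (Real.log (M' ω)) 0
              + (Real.log μmax - Real.log μ') * R := by
            exact add_le_add hIH hstep
        _ = ∑ ω, w ω * G ω * max (Real.log (M ω)) 0 := by
            rw [Finset.sum_congr rfl fun ω _ => hRdec ω, Finset.sum_add_distrib]
            congr 1
            rw [← Finset.sum_filter, hR, Finset.mul_sum]
            exact Finset.sum_congr rfl fun ω _ => mul_comm _ _

section MAIN
variable {S : Type*} [Fintype S] [DecidableEq S]

/-- The core maximal inequality: for nonnegative `g` with `π`-mean 1 whose evolution is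
uniformly bounded by `C`, the diagonal-doubled evolution maxima have π-mean at most
`1 + log C`. -/
lemma main_max (p : Matrix S S ℝ) (π : S → ℝ)
    (hp0 : ∀ a b, 0 ≤ p a b) (hrow : ∀ a, ∑ b, p a b = 1)
    (hπ0 : ∀ a, 0 ≤ π a) (hπsum : ∑ a, π a = 1)
    (hstatn : ∀ b, ∑ a, π a * p a b = π b)
    (hrev : ∀ a b, π a * p a b = π b * p b a)
    (g : S → ℝ) (hg0 : ∀ z, 0 ≤ g z) (hmass : ∑ z, π z * g z = 1)
    (C : ℝ) (hC : 1 ≤ C) (hbd : ∀ m z, Pit p g m z ≤ C)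
    (T : ℕ) (nn : S → ℕ) (hnn : ∀ y, nn y ≤ T) :
    ∑ y, π y * Pit p g (2 * nn y) y ≤ 1 + Real.log C := by
  classical
  have hSne : Nonempty S := by
    by_contra h
    rw [not_nonempty_iff] at h
    rw [Finset.univ_eq_empty, Finset.sum_empty] at hπsum
    norm_num at hπsum
  -- path space weights
  set wt : (Fin (T + 1) → S) → ℝ :=
    fun ω => π (ω 0) * ∏ i : Fin T, p (ω i.castSucc) (ω i.succ) with hwt
  have hwt0 : ∀ ω, 0 ≤ wt ω := fun ω =>
    mul_nonneg (hπ0 _) (Finset.prod_nonneg fun i _ => hp0 _ _)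
  have hpathE : ∀ F, pathE p T π F = ∑ ω, wt ω * F ω := fun F => rfl
  -- the maximal function
  set Mstar : (Fin (T + 1) → S) → ℝ :=
    fun ω => Finset.univ.sup' ⟨(0 : Fin (T + 1)), Finset.mem_univ _⟩
      (fun j : Fin (T + 1) => Pit p g j.1 (ω j)) with hMstar
  have hMC : ∀ ω, Mstar ω ≤ C := fun ω =>
    Finset.sup'_le _ _ fun j _ => hbd j.1 (ω j)
  have hM0 : ∀ ω, 0 ≤ Mstar ω := fun ω =>
    le_trans (Pit_nonneg hp0 hg0 0 (ω 0))
      (Finset.le_sup' (fun j : Fin (T + 1) => Pit p g j.1 (ω j)) (Finset.mem_univ 0))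
  -- ∑ wt = 1
  have hwsum : ∑ ω, wt ω = 1 := by
    have h1 : pathE p T π (fun ω => ∏ m : Fin (T + 1), (fun (_ : ℕ) (_ : S) => (1:ℝ)) m.1 (ω m))
        = ∑ z, π z * hrun p (fun (_ : ℕ) (_ : S) => (1:ℝ)) T z := pathE_prod_pi hrev T (fun (_ : ℕ) (_ : S) => (1:ℝ))
    have h2 : ∀ k, hrun p (fun (_ : ℕ) (_ : S) => (1:ℝ)) k = fun _ => 1 := by
      intro k
      induction k with
      | zero => rfl
      | succ n ih => funext z; show (∑ w, p z w * hrun p _ n w) * 1 = 1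
                     rw [ih]; simp [hrow z]
    rw [hpathE] at h1
    simp only [h2, Finset.prod_const_one, mul_one] at h1
    rw [h1, hπsum]

  -- ∑ wt g(ω 0) = 1
  have hφg : ∀ k, hrun p (fun (m : ℕ) (z : S) => if m = 0 then g z else 1) k = Pit p g k := by
    intro k
    induction k with
    | zero => rw [Pit_zero]; rfl
    | succ n ih =>
      funext z
      show (∑ w, p z w * hrun p (fun (m : ℕ) (z : S) => if m = 0 then g z else 1) n w)
          * (if n + 1 = 0 then g z else 1) = _
      rw [ih, if_neg (Nat.succ_ne_zero n), mul_one, Pit_succ]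
      rfl
  have hgsum : ∑ ω, wt ω * g (ω 0) = 1 := by
    have h1 := pathE_prod_pi hrev T (fun (m : ℕ) (z : S) => if m = 0 then g z else 1)
    rw [hφg] at h1
    have h2 : ∀ ω : Fin (T + 1) → S,
        (∏ m : Fin (T + 1), (if m.1 = 0 then g (ω m) else 1)) = g (ω 0) := by
      intro ω
      rw [Finset.prod_eq_single (0 : Fin (T + 1))]
      · simp
      · intro m _ hm
        rw [if_neg (fun h => hm (by apply Fin.ext; simpa using h))]
      · intro h; exact absurd (Finset.mem_univ _) h
    rw [hpathE] at h1
    calc ∑ ω, wt ω * g (ω 0)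
        = ∑ ω, wt ω * ∏ m : Fin (T + 1), (if m.1 = 0 then g (ω m) else 1) :=
          Finset.sum_congr rfl fun ω _ => by rw [h2]
      _ = ∑ z, π z * Pit p g T z := h1
      _ = ∑ z, π z * g z := sum_pi_Pit hstatn g T
      _ = 1 := hmass
  -- evaluation of the two-point observable
  have hF1 : ∀ (y : S) (n : ℕ) (hn : n < T + 1),
      ∑ ω, wt ω * ((if ω 0 = y then (1:ℝ) else 0) * Pit p g n (ω ⟨n, hn⟩))
        = π y * Pit p g (2 * n) y := by
    intro y n hn
    set φ : ℕ → S → ℝ := fun m z =>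
      (if m = 0 then (if z = y then 1 else 0) else 1) *
        (if m = n then Pit p g n z else 1) with hφ
    have h1 := pathE_prod_pi hrev T φ
    have h2 : ∀ ω : Fin (T + 1) → S, (∏ m : Fin (T + 1), φ m.1 (ω m))
        = (if ω 0 = y then (1:ℝ) else 0) * Pit p g n (ω ⟨n, hn⟩) := by
      intro ω
      rw [hφ]; beta_reduce
      rw [Finset.prod_mul_distrib]
      congr 1
      · rw [Finset.prod_eq_single (0 : Fin (T + 1))]
        · simp
        · intro m _ hm
          rw [if_neg (fun h => hm (by apply Fin.ext; simpa using h))]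
        · intro h; exact absurd (Finset.mem_univ _) h
      · rw [Finset.prod_eq_single (⟨n, hn⟩ : Fin (T + 1))]
        · rw [if_pos rfl]
        · intro m _ hm
          rw [if_neg (fun h => hm (by apply Fin.ext; simpa using h))]
        · intro h; exact absurd (Finset.mem_univ _) h
    have hpre : ∀ m, m < n → hrun p φ m = fun z => (p ^ m) z y := by
      intro m hm
      induction m with
      | zero =>
        funext z
        show φ 0 z = _
        rw [hφ]; beta_reduce
        rw [if_pos rfl, if_neg (Nat.ne_of_lt hm), mul_one, pow_zero, Matrix.one_apply]
      | succ k ih =>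
        funext z
        show (∑ w, p z w * hrun p φ k w) * φ (k + 1) z = _
        rw [ih (Nat.lt_of_succ_lt hm)]
        have hφk : φ (k + 1) z = 1 := by
          rw [hφ]; beta_reduce
          rw [if_neg (Nat.succ_ne_zero k), if_neg (Nat.ne_of_lt hm), one_mul]
        rw [hφk, mul_one, pow_succ', Matrix.mul_apply]
    have hatn : hrun p φ n = fun z => (p ^ n) z y * Pit p g n z := by
      cases n with
      | zero =>
        funext z
        show φ 0 z = _
        rw [hφ]; beta_reduce
        rw [if_pos rfl, if_pos rfl, pow_zero, Matrix.one_apply]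
      | succ k =>
        funext z
        show (∑ w, p z w * hrun p φ k w) * φ (k + 1) z = _
        rw [hpre k (Nat.lt_succ_self k)]
        have hφk : φ (k + 1) z = Pit p g (k + 1) z := by
          rw [hφ]; beta_reduce
          rw [if_neg (Nat.succ_ne_zero k), if_pos rfl, one_mul]
        rw [hφk, pow_succ', Matrix.mul_apply]
    have htail : ∀ k, n ≤ k → (∑ z, π z * hrun p φ k z) = ∑ z, π z * hrun p φ n z := by
      intro k hk
      refine Nat.le_induction rfl ?_ k hk
      intro m hm ih
      have hone : hrun p φ (m + 1) = Pop p (hrun p φ m) := by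
        funext z
        show (∑ w, p z w * hrun p φ m w) * φ (m + 1) z = _
        have : φ (m + 1) z = 1 := by
          rw [hφ]; beta_reduce
          rw [if_neg (Nat.succ_ne_zero m), if_neg (by omega : ¬ m + 1 = n), one_mul]
        rw [this, mul_one]
        rfl
      rw [hone, sum_pi_Pop hstatn, ih]
    calc ∑ ω, wt ω * ((if ω 0 = y then (1:ℝ) else 0) * Pit p g n (ω ⟨n, hn⟩))
        = ∑ z, π z * hrun p φ T z := by
          rw [← h1, hpathE]
          exact Finset.sum_congr rfl fun ω _ => by rw [h2 ω]
      _ = ∑ z, π z * hrun p φ n z := htail T (Nat.lt_succ_iff.mp hn)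
      _ = ∑ z, π z * ((p ^ n) z y * Pit p g n z) := by rw [hatn]
      _ = π y * Pit p g (2 * n) y := by
          have hswap : ∀ z, π z * ((p ^ n) z y * Pit p g n z)
              = π y * ((p ^ n) y z * Pit p g n z) := by
            intro z
            calc π z * ((p ^ n) z y * Pit p g n z)
                = (π z * (p ^ n) z y) * Pit p g n z := by ring
              _ = (π y * (p ^ n) y z) * Pit p g n z := by rw [pow_rev hrev]
              _ = π y * ((p ^ n) y z * Pit p g n z) := by ring
          rw [Finset.sum_congr rfl fun z _ => hswap z, ← Finset.mul_sum]
          congr 1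
          show ∑ z, (p ^ n) y z * Pit p g n z = Pit p g (2 * n) y
          simp only [Pit, Finset.mul_sum]
          rw [Finset.sum_comm]
          rw [two_mul, pow_add]
          refine Finset.sum_congr rfl fun w _ => ?_
          rw [Matrix.mul_apply, Finset.sum_mul]
          exact Finset.sum_congr rfl fun z _ => by ring
  -- stopping-pattern comparison
  set φB : ℝ → ℕ → ℕ → S → ℝ := fun lam n m z =>
    if m < n then 1 else if m = n then (if lam ≤ Pit p g n z then 1 else 0)
      else (if lam ≤ Pit p g m z then 0 else 1) with hφB
  set φA : ℝ → ℕ → ℕ → S → ℝ := fun lam n m z =>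
    (if m = 0 then g z else 1) * φB lam n m z with hφA
  have hcmp : ∀ (lam : ℝ), 0 ≤ lam → ∀ (n : ℕ), n ≤ T →
      lam * (∑ z, π z * hrun p (φB lam n) T z) ≤ ∑ z, π z * hrun p (φA lam n) T z := by
    intro lam hlam n hnT
    have hBpre : ∀ m, m < n → hrun p (φB lam n) m = fun _ => 1 := by
      intro m hm
      induction m with
      | zero => funext z; show φB lam n 0 z = 1; simp only [hφB]; rw [if_pos hm]
      | succ k ih =>
        funext z
        show (∑ w, p z w * hrun p (φB lam n) k w) * φB lam n (k + 1) z = 1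
        rw [ih (Nat.lt_of_succ_lt hm)]
        have : φB lam n (k + 1) z = 1 := by simp only [hφB]; rw [if_pos hm]
        rw [this, mul_one]
        simp [hrow z]
    have hApre : ∀ m, m < n → hrun p (φA lam n) m = Pit p g m := by
      intro m hm
      induction m with
      | zero =>
        funext z
        show φA lam n 0 z = _
        rw [hφA]; beta_reduce
        rw [if_pos rfl, hφB]; beta_reduce
        rw [if_pos hm, mul_one, Pit_zero]
      | succ k ih =>
        funext z
        show (∑ w, p z w * hrun p (φA lam n) k w) * φA lam n (k + 1) z = _
        rw [ih (Nat.lt_of_succ_lt hm)]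
        have : φA lam n (k + 1) z = 1 := by
          rw [hφA]; beta_reduce
          rw [if_neg (Nat.succ_ne_zero k), hφB]; beta_reduce
          rw [if_pos hm, one_mul]
        rw [this, mul_one, Pit_succ]
        rfl
    have hBn : hrun p (φB lam n) n = fun z => if lam ≤ Pit p g n z then 1 else 0 := by
      cases n with
      | zero =>
        funext z
        show φB lam 0 0 z = _
        rw [hφB]; beta_reduce
        rw [if_neg (lt_irrefl 0), if_pos rfl]
      | succ k =>
        funext z
        show (∑ w, p z w * hrun p (φB lam (k + 1)) k w) * φB lam (k + 1) (k + 1) z = _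
        rw [hBpre k (Nat.lt_succ_self k)]
        have : φB lam (k + 1) (k + 1) z = if lam ≤ Pit p g (k + 1) z then 1 else 0 := by
          rw [hφB]; beta_reduce
          rw [if_neg (lt_irrefl (k + 1)), if_pos rfl]
        rw [this]
        simp [hrow z]
    have hAn : hrun p (φA lam n) n
        = fun z => Pit p g n z * (if lam ≤ Pit p g n z then 1 else 0) := by
      cases n with
      | zero =>
        funext z
        show φA lam 0 0 z = _
        rw [hφA]; beta_reduce
        rw [if_pos rfl, hφB]; beta_reduce
        rw [if_neg (lt_irrefl 0), if_pos rfl, Pit_zero]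
      | succ k =>
        funext z
        show (∑ w, p z w * hrun p (φA lam (k + 1)) k w) * φA lam (k + 1) (k + 1) z = _
        rw [hApre k (Nat.lt_succ_self k)]
        have : φA lam (k + 1) (k + 1) z = if lam ≤ Pit p g (k + 1) z then 1 else 0 := by
          rw [hφA]; beta_reduce
          rw [if_neg (Nat.succ_ne_zero k), one_mul, hφB]; beta_reduce
          rw [if_neg (lt_irrefl (k + 1)), if_pos rfl]
        rw [this, Pit_succ]
        rfl
    have hkey : ∀ k, n ≤ k → (∀ z, 0 ≤ hrun p (φB lam n) k z) ∧
        (∀ z, lam * hrun p (φB lam n) k z ≤ hrun p (φA lam n) k z) := by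
      intro k hk
      refine Nat.le_induction ?_ ?_ k hk
      · constructor
        · intro z; rw [hBn]; dsimp only; split <;> norm_num
        · intro z
          rw [hBn, hAn]
          dsimp only
          split
          · rename_i hcond; simpa using hcond
          · simp
      · intro m hm ih
        have hlast : ∀ z, φA lam n (m + 1) z = φB lam n (m + 1) z := by
          intro z
          rw [hφA]; beta_reduce
          rw [if_neg (Nat.succ_ne_zero m), one_mul]
        have hlast01 : ∀ z, 0 ≤ φB lam n (m + 1) z := by
          intro z
          rw [hφB]; beta_reduce
          split
          · norm_num
          · split
            · split <;> norm_num
            · split <;> norm_num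
        constructor
        · intro z
          show 0 ≤ (∑ w, p z w * hrun p (φB lam n) m w) * φB lam n (m + 1) z
          exact mul_nonneg (Finset.sum_nonneg fun w _ =>
            mul_nonneg (hp0 z w) (ih.1 w)) (hlast01 z)
        · intro z
          show lam * ((∑ w, p z w * hrun p (φB lam n) m w) * φB lam n (m + 1) z)
            ≤ (∑ w, p z w * hrun p (φA lam n) m w) * φA lam n (m + 1) z
          rw [hlast z]
          have h1 : (∑ w, p z w * (lam * hrun p (φB lam n) m w))
              = lam * (∑ w, p z w * hrun p (φB lam n) m w) := by
            rw [Finset.mul_sum]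
            exact Finset.sum_congr rfl fun w _ => by ring
          calc lam * ((∑ w, p z w * hrun p (φB lam n) m w) * φB lam n (m + 1) z)
              = (∑ w, p z w * (lam * hrun p (φB lam n) m w)) * φB lam n (m + 1) z := by
                rw [h1]; ring
            _ ≤ (∑ w, p z w * hrun p (φA lam n) m w) * φB lam n (m + 1) z := by
                apply mul_le_mul_of_nonneg_right _ (hlast01 z)
                exact Finset.sum_le_sum fun w _ =>
                  mul_le_mul_of_nonneg_left (ih.2 w) (hp0 z w)
    calc lam * (∑ z, π z * hrun p (φB lam n) T z)
        = ∑ z, π z * (lam * hrun p (φB lam n) T z) := by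
          rw [Finset.mul_sum]
          exact Finset.sum_congr rfl fun z _ => by ring
      _ ≤ ∑ z, π z * hrun p (φA lam n) T z :=
          Finset.sum_le_sum fun z _ =>
            mul_le_mul_of_nonneg_left ((hkey T hnT).2 z) (hπ0 z)
  -- pointwise partition of the level-set indicator by the last crossing time
  have hpart : ∀ (lam : ℝ) (ω : Fin (T + 1) → S),
      (if lam ≤ Mstar ω then (1:ℝ) else 0)
        = ∑ j : Fin (T + 1), ∏ m : Fin (T + 1), φB lam j.1 m.1 (ω m) := by
    intro lam ω
    by_cases hcase : lam ≤ Mstar ω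
    · rw [if_pos hcase]
      symm
      obtain ⟨jw, -, hjw⟩ := Finset.exists_mem_eq_sup'
        (⟨(0 : Fin (T + 1)), Finset.mem_univ _⟩ :
          (Finset.univ : Finset (Fin (T + 1))).Nonempty)
        (fun j : Fin (T + 1) => Pit p g j.1 (ω j))
      have hj : lam ≤ Pit p g jw.1 (ω jw) := by
        rw [← hjw]; exact hcase
      set P : ℕ → Prop := fun m => ∃ hm : m < T + 1, lam ≤ Pit p g m (ω ⟨m, hm⟩) with hPdef
      have hPex : P jw.1 := ⟨jw.isLt, by simpa using hj⟩
      set n₀ := Nat.findGreatest P T with hn₀def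
      have hn₀T : n₀ ≤ T := Nat.findGreatest_le T
      have hPn₀ : P n₀ := Nat.findGreatest_spec (Fin.is_le jw) hPex
      set j₀ : Fin (T + 1) := ⟨n₀, Nat.lt_succ_of_le hn₀T⟩ with hj₀def
      have hj₀val : (j₀ : ℕ) = n₀ := rfl
      have hval₀ : lam ≤ Pit p g n₀ (ω j₀) := by
        obtain ⟨hlt, hv⟩ := hPn₀
        exact hv
      rw [Finset.sum_eq_single j₀]
      · apply Finset.prod_eq_one
        intro m _
        rcases lt_trichotomy (m.1) n₀ with h | h | h
        · rw [hφB]; beta_reduce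
          rw [if_pos (by omega : m.1 < (j₀ : ℕ))]
        · have hm : m = j₀ := by
            apply Fin.ext
            rw [hj₀val]; exact h
          rw [hm, hφB]; beta_reduce
          rw [if_neg (lt_irrefl _), if_pos rfl, if_pos hval₀]
        · have hnP : ¬ P m.1 := Nat.findGreatest_is_greatest h (Fin.is_le m)
          have hcond : ¬ lam ≤ Pit p g m.1 (ω m) := fun hc => hnP ⟨m.isLt, by simpa using hc⟩
          rw [hφB]; beta_reduce
          rw [if_neg (by omega : ¬ m.1 < (j₀ : ℕ)), if_neg (by omega : ¬ m.1 = (j₀ : ℕ)),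
            if_neg hcond]
      · intro j _ hjne
        rcases lt_trichotomy (j.1) n₀ with h | h | h
        · apply Finset.prod_eq_zero (Finset.mem_univ j₀)
          rw [hφB]; beta_reduce
          rw [if_neg (by omega : ¬ (j₀ : ℕ) < j.1), if_neg (by omega : ¬ (j₀ : ℕ) = j.1)]
          rw [if_pos (by rw [hj₀val]; exact hval₀)]
        · exact absurd (Fin.ext (by rw [hj₀val]; exact h) : j = j₀) hjne
        · apply Finset.prod_eq_zero (Finset.mem_univ j)
          have hnP : ¬ P j.1 := Nat.findGreatest_is_greatest h (Fin.is_le j)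
          have hcond : ¬ lam ≤ Pit p g j.1 (ω j) := fun hc => hnP ⟨j.isLt, by simpa using hc⟩
          rw [hφB]; beta_reduce
          rw [if_neg (lt_irrefl _), if_pos rfl, if_neg hcond]
      · intro habs; exact absurd (Finset.mem_univ j₀) habs
    · rw [if_neg hcase]
      symm
      apply Finset.sum_eq_zero
      intro j _
      apply Finset.prod_eq_zero (Finset.mem_univ j)
      have hcond : ¬ lam ≤ Pit p g j.1 (ω j) := by
        intro hc
        apply hcase
        exact le_trans hc
          (Finset.le_sup' (fun j : Fin (T + 1) => Pit p g j.1 (ω j)) (Finset.mem_univ j))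
      rw [hφB]; beta_reduce
      rw [if_neg (lt_irrefl _), if_pos rfl, if_neg hcond]
  -- the weak maximal inequality on path space
  have hweak : ∀ lam : ℝ, 1 ≤ lam →
      lam * ∑ ω ∈ Finset.univ.filter (fun ω => lam ≤ Mstar ω), wt ω
        ≤ ∑ ω ∈ Finset.univ.filter (fun ω => lam ≤ Mstar ω), wt ω * g (ω 0) := by
    intro lam hlam
    have hAB : ∀ (j : Fin (T + 1)) (ω : Fin (T + 1) → S),
        (∏ m : Fin (T + 1), φA lam j.1 m.1 (ω m))
          = g (ω 0) * ∏ m : Fin (T + 1), φB lam j.1 m.1 (ω m) := by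
      intro j ω
      calc ∏ m : Fin (T + 1), φA lam j.1 m.1 (ω m)
          = ∏ m : Fin (T + 1),
              ((if m.1 = 0 then g (ω m) else 1) * φB lam j.1 m.1 (ω m)) :=
            Finset.prod_congr rfl fun m _ => by rw [hφA]
        _ = (∏ m : Fin (T + 1), (if m.1 = 0 then g (ω m) else 1))
              * ∏ m : Fin (T + 1), φB lam j.1 m.1 (ω m) := Finset.prod_mul_distrib
        _ = g (ω 0) * ∏ m : Fin (T + 1), φB lam j.1 m.1 (ω m) := by
            congr 1
            rw [Finset.prod_eq_single (0 : Fin (T + 1))]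
            · simp
            · intro m _ hm
              rw [if_neg (fun h => hm (by apply Fin.ext; simpa using h))]
            · intro h; exact absurd (Finset.mem_univ _) h
    have e1 : ∑ ω ∈ Finset.univ.filter (fun ω => lam ≤ Mstar ω), wt ω
        = ∑ j : Fin (T + 1), ∑ z, π z * hrun p (φB lam j.1) T z := by
      rw [Finset.sum_filter]
      calc ∑ ω, (if lam ≤ Mstar ω then wt ω else 0)
          = ∑ ω, wt ω * (if lam ≤ Mstar ω then (1:ℝ) else 0) := by
            refine Finset.sum_congr rfl fun ω _ => ?_
            by_cases h : lam ≤ Mstar ω <;> simp [h]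
        _ = ∑ ω, ∑ j : Fin (T + 1), wt ω * ∏ m : Fin (T + 1), φB lam j.1 m.1 (ω m) := by
            refine Finset.sum_congr rfl fun ω _ => ?_
            rw [hpart lam ω, Finset.mul_sum]
        _ = ∑ j : Fin (T + 1), ∑ ω, wt ω * ∏ m : Fin (T + 1), φB lam j.1 m.1 (ω m) :=
            Finset.sum_comm
        _ = ∑ j : Fin (T + 1), ∑ z, π z * hrun p (φB lam j.1) T z := by
            refine Finset.sum_congr rfl fun j _ => ?_
            rw [← hpathE]
            exact pathE_prod_pi hrev T (φB lam j.1)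
    have e2 : ∑ ω ∈ Finset.univ.filter (fun ω => lam ≤ Mstar ω), wt ω * g (ω 0)
        = ∑ j : Fin (T + 1), ∑ z, π z * hrun p (φA lam j.1) T z := by
      rw [Finset.sum_filter]
      calc ∑ ω, (if lam ≤ Mstar ω then wt ω * g (ω 0) else 0)
          = ∑ ω, wt ω * (g (ω 0) * (if lam ≤ Mstar ω then (1:ℝ) else 0)) := by
            refine Finset.sum_congr rfl fun ω _ => ?_
            by_cases h : lam ≤ Mstar ω <;> simp [h]
        _ = ∑ ω, ∑ j : Fin (T + 1), wt ω * ∏ m : Fin (T + 1), φA lam j.1 m.1 (ω m) := by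
            refine Finset.sum_congr rfl fun ω _ => ?_
            rw [hpart lam ω, Finset.mul_sum, Finset.mul_sum]
            refine Finset.sum_congr rfl fun j _ => ?_
            rw [hAB j ω]
        _ = ∑ j : Fin (T + 1), ∑ ω, wt ω * ∏ m : Fin (T + 1), φA lam j.1 m.1 (ω m) :=
            Finset.sum_comm
        _ = ∑ j : Fin (T + 1), ∑ z, π z * hrun p (φA lam j.1) T z := by
            refine Finset.sum_congr rfl fun j _ => ?_
            rw [← hpathE]
            exact pathE_prod_pi hrev T (φA lam j.1)
    rw [e1, e2, Finset.mul_sum]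
    exact Finset.sum_le_sum fun j _ =>
      hcmp lam (le_trans zero_le_one hlam) j.1 (Fin.is_le j)
  -- apply the value induction
  have hVI := valueInduction wt (fun ω => g (ω 0)) hwt0 (fun ω => hg0 _) Mstar hweak
  have hlogC : ∀ ω, max (Real.log (Mstar ω)) 0 ≤ Real.log C := by
    intro ω
    rcases eq_or_lt_of_le (hM0 ω) with h | h
    · rw [← h, Real.log_zero, max_self]
      exact Real.log_nonneg hC
    · exact max_le (Real.log_le_log h (hMC ω)) (Real.log_nonneg hC)
  have hdec : ∀ ω, Mstar ω = min (Mstar ω) 1 + max (Mstar ω - 1) 0 := by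
    intro ω
    rcases le_total (Mstar ω) 1 with h | h
    · rw [min_eq_left h, max_eq_right (by linarith)]; ring
    · rw [min_eq_right h, max_eq_left (by linarith)]; ring
  calc ∑ y, π y * Pit p g (2 * nn y) y
      = ∑ y, ∑ ω, wt ω * ((if ω 0 = y then (1:ℝ) else 0)
          * Pit p g (nn y) (ω ⟨nn y, Nat.lt_succ_of_le (hnn y)⟩)) :=
        Finset.sum_congr rfl fun y _ => (hF1 y (nn y) (Nat.lt_succ_of_le (hnn y))).symm
    _ ≤ ∑ y, ∑ ω, wt ω * ((if ω 0 = y then (1:ℝ) else 0) * Mstar ω) := by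
        refine Finset.sum_le_sum fun y _ => Finset.sum_le_sum fun ω _ => ?_
        refine mul_le_mul_of_nonneg_left ?_ (hwt0 ω)
        refine mul_le_mul_of_nonneg_left ?_ (by split <;> norm_num)
        exact Finset.le_sup' (fun j : Fin (T + 1) => Pit p g j.1 (ω j))
          (Finset.mem_univ ⟨nn y, Nat.lt_succ_of_le (hnn y)⟩)
    _ = ∑ ω, wt ω * Mstar ω := by
        rw [Finset.sum_comm]
        refine Finset.sum_congr rfl fun ω _ => ?_
        calc ∑ y, wt ω * ((if ω 0 = y then (1:ℝ) else 0) * Mstar ω)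
            = ∑ y, (if ω 0 = y then wt ω * Mstar ω else 0) := by
              refine Finset.sum_congr rfl fun y _ => ?_
              by_cases h : ω 0 = y <;> simp [h]
          _ = wt ω * Mstar ω := by rw [Finset.sum_ite_eq]; simp
    _ = ∑ ω, wt ω * min (Mstar ω) 1 + ∑ ω, wt ω * max (Mstar ω - 1) 0 := by
        rw [← Finset.sum_add_distrib]
        refine Finset.sum_congr rfl fun ω _ => ?_
        conv_lhs => rw [hdec ω]
        ring
    _ ≤ 1 + Real.log C := by
        have h1 : ∑ ω, wt ω * min (Mstar ω) 1 ≤ 1 := by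
          have hle : ∑ ω, wt ω * min (Mstar ω) 1 ≤ ∑ ω, wt ω := by
            refine Finset.sum_le_sum fun ω _ => ?_
            have h2 := min_le_right (Mstar ω) 1
            have := mul_le_mul_of_nonneg_left h2 (hwt0 ω)
            linarith [mul_one (wt ω)]
          linarith [hwsum]
        have h2 : ∑ ω, wt ω * max (Mstar ω - 1) 0 ≤ Real.log C := by
          refine le_trans hVI ?_
          calc ∑ ω, wt ω * g (ω 0) * max (Real.log (Mstar ω)) 0
              ≤ ∑ ω, wt ω * g (ω 0) * Real.log C :=
                Finset.sum_le_sum fun ω _ =>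
                  mul_le_mul_of_nonneg_left (hlogC ω) (mul_nonneg (hwt0 ω) (hg0 _))
            _ = Real.log C := by
                rw [← Finset.sum_mul, hgsum, one_mul]
        linarith

end MAIN

section FINAL
variable {S : Type*} [Fintype S] [DecidableEq S]

theorem sum_maxProb_bound' (p : Matrix S S ℝ) (π : S → ℝ)
    (hp : IsStochastic p) (hstat : IsStationaryDistribution p π) (hrev : IsReversible p π)
    (x : S) (hx : 0 < π x) :
    ∑ y, maxProb p x y ≤ 2 * Real.exp 1 * max 1 (Real.log (1 / π x)) := by
  classical
  obtain ⟨hp0, hrow⟩ := hp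
  obtain ⟨hπ0, hπsum, hstatn⟩ := hstat
  have hNS : Nonempty S := ⟨x⟩
  have hπx1 : π x ≤ 1 := by
    calc π x ≤ ∑ a, π a := Finset.single_le_sum (fun a _ => hπ0 a) (Finset.mem_univ x)
      _ = 1 := hπsum
  set C : ℝ := 1 / π x with hCdef
  have hC1 : 1 ≤ C := by rw [hCdef, le_div_iff₀ hx]; linarith
  have hCpos : 0 < C := lt_of_lt_of_le one_pos hC1
  set f : S → ℝ := fun z => if z = x then 1 / π x else 0 with hf
  have hf0 : ∀ z, 0 ≤ f z := by
    intro z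
    show (0:ℝ) ≤ if z = x then 1 / π x else 0
    split
    · positivity
    · exact le_rfl
  have hfmass : ∑ z, π z * f z = 1 := by
    rw [Finset.sum_eq_single x]
    · show π x * (if x = x then 1 / π x else 0) = 1
      rw [if_pos rfl]; field_simp
    · intro b _ hb
      show π b * (if b = x then 1 / π x else 0) = 0
      rw [if_neg hb, mul_zero]
    · intro h; exact absurd (Finset.mem_univ _) h
  have hPitf : ∀ m z, Pit p f m z = (p ^ m) z x * (1 / π x) := by
    intro m z
    show ∑ w, (p ^ m) z w * f w = _
    rw [Finset.sum_eq_single x]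
    · show (p ^ m) z x * (if x = x then 1 / π x else 0) = _
      rw [if_pos rfl]
    · intro b _ hb
      show (p ^ m) z b * (if b = x then 1 / π x else 0) = 0
      rw [if_neg hb, mul_zero]
    · intro h; exact absurd (Finset.mem_univ _) h
  have hfbd : ∀ m z, Pit p f m z ≤ C := by
    intro m z
    rw [hPitf]
    calc (p ^ m) z x * (1 / π x) ≤ 1 * (1 / π x) := by
          apply mul_le_mul_of_nonneg_right (pow_entry_le_one_s5 hp0 hrow m z x)
          positivity
      _ = C := by rw [one_mul]
  have hterm : ∀ (t : ℕ) (y : S), π y * Pit p f t y = (p ^ t) x y := by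
    intro t y
    rw [hPitf]
    have hrt := pow_rev hrev t y x
    calc π y * ((p ^ t) y x * (1 / π x)) = (π y * (p ^ t) y x) * (1 / π x) := by ring
      _ = (π x * (p ^ t) x y) * (1 / π x) := by rw [hrt]
      _ = (p ^ t) x y := by field_simp
  have hcore : ∀ tf : S → ℕ, ∑ y, (p ^ tf y) x y ≤ 2 * (1 + Real.log C) := by
    intro tf
    set T := Finset.univ.sup tf with hT
    have hTle : ∀ y, tf y ≤ T := fun y => Finset.le_sup (Finset.mem_univ y)
    set g' : S → ℝ := Pop p f with hg'
    have hg'0 : ∀ z, 0 ≤ g' z := fun z =>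
      Finset.sum_nonneg fun w _ => mul_nonneg (hp0 z w) (hf0 w)
    have hg'mass : ∑ z, π z * g' z = 1 := by
      rw [hg', sum_pi_Pop hstatn, hfmass]
    have hg'bd : ∀ m z, Pit p g' m z ≤ C := by
      intro m z
      rw [hg', ← Pit_succ']
      exact hfbd (m + 1) z
    have hnn : ∀ y, tf y / 2 ≤ T := fun y => le_trans (Nat.div_le_self _ _) (hTle y)
    have hMe := main_max p π hp0 hrow hπ0 hπsum hstatn hrev f hf0 hfmass C hC1 hfbd
      T (fun y => tf y / 2) hnn
    have hMo := main_max p π hp0 hrow hπ0 hπsum hstatn hrev g' hg'0 hg'mass C hC1 hg'bd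
      T (fun y => tf y / 2) hnn
    rw [← Finset.sum_filter_add_sum_filter_not Finset.univ (fun y => Even (tf y))]
    have heven : ∑ y ∈ Finset.univ.filter (fun y => Even (tf y)), (p ^ tf y) x y
        ≤ 1 + Real.log C := by
      refine le_trans ?_ hMe
      have hsub : ∑ y ∈ Finset.univ.filter (fun y => Even (tf y)), (p ^ tf y) x y
          = ∑ y ∈ Finset.univ.filter (fun y => Even (tf y)),
              π y * Pit p f (2 * (tf y / 2)) y := by
        refine Finset.sum_congr rfl fun y hy => ?_
        have he : Even (tf y) := (Finset.mem_filter.mp hy).2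
        have h2 : 2 * (tf y / 2) = tf y := by
          rw [mul_comm]; exact Nat.div_two_mul_two_of_even he
        rw [h2, hterm]
      rw [hsub]
      refine Finset.sum_le_sum_of_subset_of_nonneg (Finset.filter_subset _ _) ?_
      intro y _ _
      exact mul_nonneg (hπ0 y) (Pit_nonneg hp0 hf0 _ y)
    have hodd : ∑ y ∈ Finset.univ.filter (fun y => ¬ Even (tf y)), (p ^ tf y) x y
        ≤ 1 + Real.log C := by
      refine le_trans ?_ hMo
      have hsub : ∑ y ∈ Finset.univ.filter (fun y => ¬ Even (tf y)), (p ^ tf y) x y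
          = ∑ y ∈ Finset.univ.filter (fun y => ¬ Even (tf y)),
              π y * Pit p g' (2 * (tf y / 2)) y := by
        refine Finset.sum_congr rfl fun y hy => ?_
        have ho : Odd (tf y) := Nat.not_even_iff_odd.mp (Finset.mem_filter.mp hy).2
        have h2 : 2 * (tf y / 2) + 1 = tf y := by
          rw [mul_comm]; exact Nat.div_two_mul_two_add_one_of_odd ho
        have h3 : Pit p g' (2 * (tf y / 2)) y = Pit p f (tf y) y := by
          rw [hg', ← Pit_succ', h2]
        rw [h3, hterm]
      rw [hsub]
      refine Finset.sum_le_sum_of_subset_of_nonneg (Finset.filter_subset _ _) ?_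
      intro y _ _
      exact mul_nonneg (hπ0 y) (Pit_nonneg hp0 hg'0 _ y)
    linarith
  have hfin : ∑ y, maxProb p x y ≤ 2 * (1 + Real.log C) := by
    refine le_of_forall_pos_le_add fun ε hε => ?_
    have hcard : (0 : ℝ) < (Fintype.card S : ℝ) := by
      have := Fintype.card_pos (α := S)
      exact_mod_cast this
    have hch : ∀ y : S, ∃ t : ℕ, maxProb p x y - ε / (Fintype.card S : ℝ) < (p ^ t) x y := by
      intro y
      apply exists_lt_of_lt_ciSup
      have : 0 < ε / (Fintype.card S : ℝ) := div_pos hε hcard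
      show maxProb p x y - _ < maxProb p x y
      linarith
    choose tf htf using hch
    calc ∑ y, maxProb p x y
        ≤ ∑ y, ((p ^ tf y) x y + ε / (Fintype.card S : ℝ)) :=
          Finset.sum_le_sum fun y _ => by linarith [htf y]
      _ = (∑ y, (p ^ tf y) x y) + ε := by
          rw [Finset.sum_add_distrib, Finset.sum_const, Finset.card_univ,
            nsmul_eq_mul]
          field_simp
      _ ≤ 2 * (1 + Real.log C) + ε := by linarith [hcore tf]
  have hnum : 2 * (1 + Real.log C) ≤ 2 * Real.exp 1 * max 1 (Real.log (1 / π x)) := by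
    have hL0 : 0 ≤ Real.log C := Real.log_nonneg hC1
    have he : 2 ≤ Real.exp 1 := by
      have := Real.add_one_le_exp 1
      linarith
    have hCeq : Real.log (1 / π x) = Real.log C := by rw [hCdef]
    rw [hCeq]
    rcases le_total (Real.log C) 1 with h | h
    · rw [max_eq_left h]
      nlinarith
    · rw [max_eq_right h]
      nlinarith
  exact le_trans hfin hnum

end FINAL

/-- Proposition 4: for a reversible chain with stationary distribution `π` and a state
`x` with `π x > 0`, `Σ_y p*(x, y) ≤ 2e · max(1, log(1/π(x)))`. -/
theorem sum_maxProb_bound {S : Type*} [Fintype S] [DecidableEq S]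
    (p : Matrix S S ℝ) (π : S → ℝ)
    (hp : IsStochastic p) (hstat : IsStationaryDistribution p π) (hrev : IsReversible p π)
    (x : S) (hx : 0 < π x) :
    ∑ y, maxProb p x y ≤ 2 * Real.exp 1 * max 1 (Real.log (1 / π x)) := sum_maxProb_bound' p π hp hstat hrev x hx
end

section
/- Let m > 0 and n > 0 be integers, and let X_1, …, X_n be independent identically distributed geometric random variables with parameter p = n/(m+n). Then (1/3)·√(n/(m(m+n))) ≤ P(X_1 + X_2 + ⋯ + X_n = m) ≤ (1/2)·√(n/(m(m+n))). -/
open Real Stirling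

lemma aux_stirling_le {k : ℕ} (hk : k ≠ 0) : stirlingSeq k ≤ exp 1 / Real.sqrt 2 := by
  obtain ⟨j, rfl⟩ := Nat.exists_eq_succ_of_ne_zero hk
  have := stirlingSeq'_antitone (Nat.zero_le j)
  simpa [stirlingSeq_one] using this

lemma aux_stirling_ge {k : ℕ} (hk : k ≠ 0) : Real.sqrt π ≤ stirlingSeq k := by
  obtain ⟨j, rfl⟩ := Nat.exists_eq_succ_of_ne_zero hk
  have ht : Filter.Tendsto (stirlingSeq ∘ Nat.succ) Filter.atTop (nhds (Real.sqrt π)) :=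
    tendsto_stirlingSeq_sqrt_pi.comp (Filter.tendsto_add_atTop_nat 1)
  exact stirlingSeq'_antitone.le_of_tendsto ht j

lemma aux_fact {k : ℕ} (hk : k ≠ 0) :
    (k.factorial : ℝ) = stirlingSeq k * (Real.sqrt (2 * k) * ((k : ℝ) / exp 1) ^ k) := by
  have hkpos : (0:ℝ) < k := by positivity
  have hpos : (0:ℝ) < Real.sqrt (2 * k) * ((k : ℝ) / exp 1) ^ k := by positivity
  rw [stirlingSeq, div_mul_cancel₀]
  exact ne_of_gt hpos

lemma numeric_e4 : Real.exp 1 ^ 4 ≤ 18 * π := by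
  have h1 : Real.exp 1 ≤ 2.7182818286 := le_of_lt Real.exp_one_lt_d9
  have h2 : Real.exp 1 ^ 4 ≤ 2.7182818286 ^ 4 :=
    pow_le_pow_left₀ (Real.exp_pos 1).le h1 4
  have h3 : (3.141592 : ℝ) < π := Real.pi_gt_d6
  norm_num at h2 ⊢
  nlinarith

lemma numeric_epi : Real.exp 1 ≤ π := by
  have h1 : Real.exp 1 ≤ 2.7182818286 := le_of_lt Real.exp_one_lt_d9
  have h3 : (3.141592 : ℝ) < π := Real.pi_gt_d6
  nlinarith


open MeasureTheory ProbabilityTheory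

set_option maxHeartbeats 1000000 in
lemma aux_central (n m : ℕ) (hn : 0 < n) (hm : 0 < m) :
    (1/3) * Real.sqrt ((n:ℝ) / (m * (m+n))) ≤
      ((m+n-1).choose m : ℝ) * ((n:ℝ)/(m+n))^n * ((m:ℝ)/(m+n))^m ∧
    ((m+n-1).choose m : ℝ) * ((n:ℝ)/(m+n))^n * ((m:ℝ)/(m+n))^m ≤
      (1/2) * Real.sqrt ((n:ℝ) / (m * (m+n))) := by
  obtain ⟨j, rfl⟩ := Nat.exists_eq_succ_of_ne_zero hn.ne'
  have hmn1 : m + (j+1) - 1 = m + j := by omega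
  rw [hmn1]
  push_cast
  have hm' : (0:ℝ) < (m:ℝ) := by exact_mod_cast hm
  have hrn : (0:ℝ) < (j:ℝ) + 1 := by positivity
  have hrN : (0:ℝ) < (m:ℝ) + ((j:ℝ) + 1) := by positivity
  have he1 : (0:ℝ) < exp 1 := Real.exp_pos 1
  -- removed

  have hspos : ∀ k : ℕ, k ≠ 0 → 0 < stirlingSeq k := by
    intro k hk
    obtain ⟨i, rfl⟩ := Nat.exists_eq_succ_of_ne_zero hk
    exact stirlingSeq'_pos i
  have hsmpos : 0 < stirlingSeq m := hspos m hm.ne'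
  have hsnpos : 0 < stirlingSeq (j+1) := hspos _ (Nat.succ_ne_zero j)
  have hsNpos : 0 < stirlingSeq (m+j+1) := hspos _ (by omega)
  -- factorial / choose identities
  have hA : ((m+j).choose m : ℝ) * m.factorial * j.factorial = (m+j).factorial := by
    have := Nat.choose_mul_factorial_mul_factorial (Nat.le_add_right m j)
    rw [Nat.add_sub_cancel_left] at this
    exact_mod_cast this
  have hB : ((m+j+1).choose m : ℝ) * m.factorial * ((j+1)).factorial = ((m+j+1)).factorial := by
    have := Nat.choose_mul_factorial_mul_factorial (show m ≤ m+j+1 by omega)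
    rw [show m + j + 1 - m = j + 1 by omega] at this
    exact_mod_cast this
  have hmf : (m.factorial : ℝ) ≠ 0 := by positivity
  have hjf : (j.factorial : ℝ) ≠ 0 := by positivity
  have hfs1 : ((m+j+1).factorial : ℝ) = ((m:ℝ) + ((j:ℝ)+1)) * (m+j).factorial := by
    rw [Nat.factorial_succ]; push_cast; ring
  have hfs2 : ((j+1).factorial : ℝ) = ((j:ℝ)+1) * j.factorial := by
    rw [Nat.factorial_succ]; push_cast; ring
  have hch2 : ((m+j).choose m : ℝ) * ((m:ℝ) + ((j:ℝ)+1)) = ((m+j+1).choose m : ℝ) * ((j:ℝ)+1) := by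
    apply mul_right_cancel₀ (mul_ne_zero hmf hjf)
    rw [hfs2, hfs1] at hB
    linear_combination ((m:ℝ) + ((j:ℝ)+1)) * hA - hB
  have hchpos : (0:ℝ) < ((m+j).choose m : ℝ) := by
    exact_mod_cast Nat.choose_pos (Nat.le_add_right m j)
  have hVpos : 0 < ((m+j).choose m : ℝ) * (((j:ℝ)+1)/((m:ℝ)+((j:ℝ)+1)))^(j+1) * ((m:ℝ)/((m:ℝ)+((j:ℝ)+1)))^m := by
    positivity
  -- key non-factorial equation
  have hVfe : (((m+j).choose m : ℝ) * (((j:ℝ)+1)/((m:ℝ)+((j:ℝ)+1)))^(j+1) * ((m:ℝ)/((m:ℝ)+((j:ℝ)+1)))^m)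
        * ((m.factorial:ℝ) * ((j+1).factorial:ℝ) * ((m:ℝ)+((j:ℝ)+1))) =
      ((m+j+1).factorial:ℝ) * ((j:ℝ)+1) * (((j:ℝ)+1)/((m:ℝ)+((j:ℝ)+1)))^(j+1) * ((m:ℝ)/((m:ℝ)+((j:ℝ)+1)))^m := by
    linear_combination ((((j:ℝ)+1)/((m:ℝ)+((j:ℝ)+1)))^(j+1) * ((m:ℝ)/((m:ℝ)+((j:ℝ)+1)))^m *
        (m.factorial:ℝ) * (((j+1)).factorial:ℝ)) * hch2 +
      (((j:ℝ)+1) * (((j:ℝ)+1)/((m:ℝ)+((j:ℝ)+1)))^(j+1) * ((m:ℝ)/((m:ℝ)+((j:ℝ)+1)))^m) * hB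
  rw [aux_fact hm.ne', aux_fact (Nat.succ_ne_zero j), aux_fact (show m+j+1 ≠ 0 by omega)] at hVfe
  push_cast at hVfe
  simp only [Nat.succ_eq_add_one, show ((m:ℝ) + (j:ℝ) + 1) = (m:ℝ) + ((j:ℝ)+1) from by ring] at hVfe
  -- power cancellation identity
  have hp2 : (((m:ℝ)+((j:ℝ)+1))/exp 1)^m * ((m:ℝ)/((m:ℝ)+((j:ℝ)+1)))^m = ((m:ℝ)/exp 1)^m := by
    rw [← mul_pow]; congr 1; field_simp
  have hp3 : (((m:ℝ)+((j:ℝ)+1))/exp 1)^(j+1) * (((j:ℝ)+1)/((m:ℝ)+((j:ℝ)+1)))^(j+1) = (((j:ℝ)+1)/exp 1)^(j+1) := by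
    rw [← mul_pow]; congr 1; field_simp
  have hp1 : (((m:ℝ)+((j:ℝ)+1))/exp 1)^(m+(j+1)) =
      (((m:ℝ)+((j:ℝ)+1))/exp 1)^m * (((m:ℝ)+((j:ℝ)+1))/exp 1)^(j+1) := pow_add _ _ _
  have claim : (Real.sqrt (2*((m:ℝ)+((j:ℝ)+1))) * (((m:ℝ)+((j:ℝ)+1))/exp 1)^(m+j+1))
        * (((j:ℝ)+1)/((m:ℝ)+((j:ℝ)+1)))^(j+1) * ((m:ℝ)/((m:ℝ)+((j:ℝ)+1)))^m
        * (Real.sqrt (2*(m:ℝ)) * Real.sqrt (2*((j:ℝ)+1))) =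
      (Real.sqrt (2*(m:ℝ)) * ((m:ℝ)/exp 1)^m) * (Real.sqrt (2*((j:ℝ)+1)) * (((j:ℝ)+1)/exp 1)^(j+1))
        * Real.sqrt (2*((m:ℝ)+((j:ℝ)+1))) := by
    rw [show m+j+1 = m+(j+1) by omega, hp1]
    linear_combination (Real.sqrt (2*((m:ℝ)+((j:ℝ)+1))) * Real.sqrt (2*(m:ℝ)) * Real.sqrt (2*((j:ℝ)+1)) *
        (((m:ℝ)+((j:ℝ)+1))/exp 1)^(j+1) * (((j:ℝ)+1)/((m:ℝ)+((j:ℝ)+1)))^(j+1)) * hp2 +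
      (Real.sqrt (2*((m:ℝ)+((j:ℝ)+1))) * Real.sqrt (2*(m:ℝ)) * Real.sqrt (2*((j:ℝ)+1)) *
        ((m:ℝ)/exp 1)^m) * hp3

  -- abbreviations as local terms
  have h5 : ((((m+j).choose m : ℝ) * (((j:ℝ)+1)/((m:ℝ)+((j:ℝ)+1)))^(j+1) * ((m:ℝ)/((m:ℝ)+((j:ℝ)+1)))^m)
        * (stirlingSeq m * stirlingSeq (j+1) *
          (((m:ℝ)+((j:ℝ)+1)) * (Real.sqrt (2*(m:ℝ)) * Real.sqrt (2*((j:ℝ)+1))))))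
        * ((Real.sqrt (2*(m:ℝ)) * ((m:ℝ)/exp 1)^m) * (Real.sqrt (2*((j:ℝ)+1)) * (((j:ℝ)+1)/exp 1)^(j+1))) =
      (stirlingSeq (m+j+1) * (((j:ℝ)+1) * Real.sqrt (2*((m:ℝ)+((j:ℝ)+1)))))
        * ((Real.sqrt (2*(m:ℝ)) * ((m:ℝ)/exp 1)^m) * (Real.sqrt (2*((j:ℝ)+1)) * (((j:ℝ)+1)/exp 1)^(j+1))) := by
    linear_combination (Real.sqrt (2*(m:ℝ)) * Real.sqrt (2*((j:ℝ)+1))) * hVfe +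
      (stirlingSeq (m+j+1) * ((j:ℝ)+1)) * claim
  have h6 := mul_right_cancel₀ (by positivity) h5
  have hs2m : Real.sqrt (2 * (m:ℝ)) ^ 2 = 2 * (m:ℝ) := Real.sq_sqrt (by positivity)
  have hs2n : Real.sqrt (2 * ((j:ℝ)+1)) ^ 2 = 2 * ((j:ℝ)+1) := Real.sq_sqrt (by positivity)
  have hs2N : Real.sqrt (2 * ((m:ℝ)+((j:ℝ)+1))) ^ 2 = 2 * ((m:ℝ)+((j:ℝ)+1)) := Real.sq_sqrt (by positivity)
  have hKey : (((m+j).choose m : ℝ) * (((j:ℝ)+1)/((m:ℝ)+((j:ℝ)+1)))^(j+1) * ((m:ℝ)/((m:ℝ)+((j:ℝ)+1)))^m)^2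
        * (stirlingSeq m ^2 * stirlingSeq (j+1) ^2 * (2 * (m:ℝ) * ((m:ℝ)+((j:ℝ)+1)))) =
      stirlingSeq (m+j+1) ^2 * ((j:ℝ)+1) := by
    have h7 := congrArg (· ^ 2) h6
    simp only [mul_pow] at h7
    rw [hs2m, hs2n, hs2N] at h7
    apply mul_right_cancel₀ (show (2*((j:ℝ)+1)*((m:ℝ)+((j:ℝ)+1)) : ℝ) ≠ 0 by positivity)
    linear_combination h7
  -- bounds on stirlingSeq squares
  have hsq2 : Real.sqrt 2 ^ 2 = 2 := Real.sq_sqrt (by norm_num)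
  have hsqU : ∀ k : ℕ, k ≠ 0 → stirlingSeq k ^ 2 ≤ exp 1 ^ 2 / 2 := by
    intro k hk
    have h1 := aux_stirling_le hk
    have h2 : stirlingSeq k ^ 2 ≤ (exp 1 / Real.sqrt 2) ^ 2 :=
      pow_le_pow_left₀ (hspos k hk).le h1 2
    rwa [div_pow, hsq2] at h2
  have hsqL : ∀ k : ℕ, k ≠ 0 → π ≤ stirlingSeq k ^ 2 := by
    intro k hk
    have h1 := aux_stirling_ge hk
    have h2 : Real.sqrt π ^ 2 ≤ stirlingSeq k ^ 2 :=
      pow_le_pow_left₀ (Real.sqrt_nonneg π) h1 2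
    rwa [Real.sq_sqrt Real.pi_pos.le] at h2
  have hmU := hsqU m hm.ne'
  have hnU := hsqU (j+1) (Nat.succ_ne_zero j)
  have hNL := hsqL (m+j+1) (by omega)
  have hmL := hsqL m hm.ne'
  have hnL := hsqL (j+1) (Nat.succ_ne_zero j)
  have hNU := hsqU (m+j+1) (by omega)
  set V := ((m+j).choose m : ℝ) * (((j:ℝ)+1)/((m:ℝ)+((j:ℝ)+1)))^(j+1) * ((m:ℝ)/((m:ℝ)+((j:ℝ)+1)))^m with hV
  set rN := (m:ℝ) + ((j:ℝ)+1) with hrNdef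
  have hd3 : exp 1 ^ 2 ≤ π ^ 2 := pow_le_pow_left₀ he1.le numeric_epi 2
  clear_value V rN
  constructor
  · -- lower bound
    apply le_of_pow_le_pow_left₀ two_ne_zero hVpos.le
    rw [mul_pow, Real.sq_sqrt (div_nonneg hrn.le (mul_nonneg hm'.le hrN.le))]
    rw [show ((1:ℝ)/3)^2 * (((j:ℝ)+1)/((m:ℝ)*rN)) = ((1/9)*((j:ℝ)+1))/((m:ℝ)*rN) from by ring]
    rw [div_le_iff₀ (mul_pos hm' hrN)]
    have c1 : π * ((j:ℝ)+1) ≤ stirlingSeq (m+j+1)^2 * ((j:ℝ)+1) :=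
      mul_le_mul_of_nonneg_right hNL hrn.le
    have c2 : stirlingSeq m ^2 * stirlingSeq (j+1) ^2 ≤ (exp 1^2/2)*(exp 1^2/2) :=
      mul_le_mul hmU hnU (sq_nonneg _) (by positivity)
    have c3 : V^2*(stirlingSeq m ^2 * stirlingSeq (j+1) ^2*(2*(m:ℝ)*rN)) ≤
        V^2*((exp 1^2/2)*(exp 1^2/2)*(2*(m:ℝ)*rN)) := by
      apply mul_le_mul_of_nonneg_left _ (sq_nonneg _)
      exact mul_le_mul_of_nonneg_right c2
        (mul_nonneg (mul_nonneg (by norm_num) hm'.le) hrN.le)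
    have c4 : π * ((j:ℝ)+1) ≤ V^2*((exp 1^2/2)*(exp 1^2/2)*(2*(m:ℝ)*rN)) :=
      c1.trans (hKey.symm.le.trans c3)
    have c6 : exp 1^4 * (V^2*((m:ℝ)*rN)/2) ≤ (18*π) * (V^2*((m:ℝ)*rN)/2) :=
      mul_le_mul_of_nonneg_right numeric_e4
        (div_nonneg (mul_nonneg (sq_nonneg V) (mul_nonneg hm'.le hrN.le)) (by norm_num))
    have c8 : π * ((j:ℝ)+1) ≤ π * (9*(V^2*((m:ℝ)*rN))) := by
      calc π * ((j:ℝ)+1) ≤ V^2*((exp 1^2/2)*(exp 1^2/2)*(2*(m:ℝ)*rN)) := c4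
        _ = exp 1^4 * (V^2*((m:ℝ)*rN)/2) := by ring
        _ ≤ (18*π) * (V^2*((m:ℝ)*rN)/2) := c6
        _ = π * (9*(V^2*((m:ℝ)*rN))) := by ring
    have c9 := le_of_mul_le_mul_left c8 Real.pi_pos
    linarith [c9]
  · -- upper bound
    apply le_of_pow_le_pow_left₀ two_ne_zero
      (mul_nonneg (by norm_num) (Real.sqrt_nonneg _))
    rw [mul_pow, Real.sq_sqrt (div_nonneg hrn.le (mul_nonneg hm'.le hrN.le))]
    rw [show ((1:ℝ)/2)^2 * (((j:ℝ)+1)/((m:ℝ)*rN)) = ((1/4)*((j:ℝ)+1))/((m:ℝ)*rN) from by ring]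
    rw [le_div_iff₀ (mul_pos hm' hrN)]
    have d1 : π*π ≤ stirlingSeq m ^2 * stirlingSeq (j+1) ^2 :=
      mul_le_mul hmL hnL Real.pi_pos.le (sq_nonneg _)
    have d2 : V^2*((π*π)*(2*(m:ℝ)*rN)) ≤ V^2*(stirlingSeq m ^2 * stirlingSeq (j+1) ^2*(2*(m:ℝ)*rN)) := by
      apply mul_le_mul_of_nonneg_left _ (sq_nonneg _)
      exact mul_le_mul_of_nonneg_right d1
        (mul_nonneg (mul_nonneg (by norm_num) hm'.le) hrN.le)
    have d4 : stirlingSeq (m+j+1)^2 * ((j:ℝ)+1) ≤ (π^2/2) * ((j:ℝ)+1) := by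
      apply mul_le_mul_of_nonneg_right _ hrn.le
      calc stirlingSeq (m+j+1)^2 ≤ exp 1^2/2 := hNU
        _ ≤ π^2/2 := by linarith
    have d5 : π^2*(V^2*(2*(m:ℝ)*rN)) ≤ π^2*(((j:ℝ)+1)/2) := by
      calc π^2*(V^2*(2*(m:ℝ)*rN)) = V^2*((π*π)*(2*(m:ℝ)*rN)) := by ring
        _ ≤ V^2*(stirlingSeq m ^2 * stirlingSeq (j+1) ^2*(2*(m:ℝ)*rN)) := d2
        _ = stirlingSeq (m+j+1)^2 * ((j:ℝ)+1) := hKey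
        _ ≤ (π^2/2) * ((j:ℝ)+1) := d4
        _ = π^2*(((j:ℝ)+1)/2) := by ring
    have d6 := le_of_mul_le_mul_left d5 (by positivity : (0:ℝ) < π^2)
    linarith [d6]


/-- Lemma 10: if `X_1, …, X_n` are i.i.d. geometric random variables with parameter
`p = n/(m+n)`, then `(1/3)√(n/(m(m+n))) ≤ P(X_1 + ⋯ + X_n = m) ≤ (1/2)√(n/(m(m+n)))`. -/
theorem iid_geometric_sum_eq_bound {Ω : Type*} [MeasurableSpace Ω]
    (μ : Measure Ω) [IsProbabilityMeasure μ]
    (n m : ℕ) (hn : 0 < n) (hm : 0 < m)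
    (X : Fin n → Ω → ℕ) (hmeas : ∀ i, Measurable (X i))
    (hindep : iIndepFun X μ)
    (hgeom : ∀ (i : Fin n) (k : ℕ),
      (μ {ω | X i ω = k}).toReal =
        ((n : ℝ) / (m + n)) * (1 - (n : ℝ) / (m + n)) ^ k) :
    (1 / 3) * Real.sqrt ((n : ℝ) / (m * (m + n))) ≤
        (μ {ω | ∑ i, X i ω = m}).toReal ∧
      (μ {ω | ∑ i, X i ω = m}).toReal ≤
        (1 / 2) * Real.sqrt ((n : ℝ) / (m * (m + n))) := by
  classical
  set p : ℝ := (n:ℝ)/(m+n) with hp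
  set T : Finset (Fin n → ℕ) := Finset.Nat.antidiagonalTuple n m with hT
  have hA : {ω | ∑ i, X i ω = m} = ⋃ k ∈ T, ⋂ i, X i ⁻¹' {k i} := by
    ext ω
    simp only [Set.mem_setOf_eq, Set.mem_iUnion, Set.mem_iInter, Set.mem_preimage,
      Set.mem_singleton_iff, hT, Finset.Nat.mem_antidiagonalTuple]
    constructor
    · intro h; exact ⟨fun i => X i ω, h, fun i => rfl⟩
    · rintro ⟨k, hk, hki⟩
      rw [Finset.sum_congr rfl fun i _ => hki i]; exact hk
  have hmeasE : ∀ k : Fin n → ℕ, MeasurableSet (⋂ i, X i ⁻¹' {k i}) :=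
    fun k => MeasurableSet.iInter fun i => (hmeas i) (measurableSet_singleton _)
  have hdisj : (↑T : Set (Fin n → ℕ)).PairwiseDisjoint (fun k => ⋂ i, X i ⁻¹' {k i}) := by
    intro k _ l _ hkl
    refine Set.disjoint_left.mpr fun ω hωk hωl => hkl (funext fun i => ?_)
    have h1 := Set.mem_iInter.mp hωk i
    have h2 := Set.mem_iInter.mp hωl i
    simp only [Set.mem_preimage, Set.mem_singleton_iff] at h1 h2
    rw [← h1, ← h2]
  have hprod : ∀ k : Fin n → ℕ,
      μ (⋂ i, X i ⁻¹' {k i}) = ∏ i, μ (X i ⁻¹' {k i}) := by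
    intro k
    exact hindep.meas_iInter fun i => ⟨{k i}, measurableSet_singleton _, rfl⟩
  have hmain : (μ {ω | ∑ i, X i ω = m}).toReal = (T.card : ℝ) * (p^n * (1-p)^m) := by
    rw [hA, measure_biUnion_finset hdisj fun k _ => hmeasE k]
    rw [ENNReal.toReal_sum fun k _ => measure_ne_top μ _]
    have hterm : ∀ k ∈ T, (μ (⋂ i, X i ⁻¹' {k i})).toReal = p^n * (1-p)^m := by
      intro k hk
      rw [hprod k, ENNReal.toReal_prod]
      have : ∀ i : Fin n, (μ (X i ⁻¹' {k i})).toReal = p * (1-p)^(k i) :=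
        fun i => hgeom i (k i)
      rw [Finset.prod_congr rfl fun i _ => this i, Finset.prod_mul_distrib,
        Finset.prod_const, Finset.card_univ, Fintype.card_fin,
        Finset.prod_pow_eq_pow_sum]
      have hsum : ∑ i, k i = m := by
        have := hk; rw [hT, Finset.Nat.mem_antidiagonalTuple] at this; exact this
      rw [hsum]
    rw [Finset.sum_congr rfl hterm, Finset.sum_const, nsmul_eq_mul]
  have hcard : (T.card : ℕ) = (m+n-1).choose m := by
    rw [hT, ← Finset.piAntidiag_univ_fin_eq_antidiagonalTuple,
      ← Finset.map_sym_eq_piAntidiag, Finset.card_map, Finset.sym_univ,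
      Finset.card_univ, Sym.card_sym_eq_multichoose, Fintype.card_fin,
      Nat.multichoose_eq, Nat.add_comm n m]
  have h1p : 1 - p = (m:ℝ)/(m+n) := by
    rw [hp]
    have : ((m:ℝ)+n) ≠ 0 := by positivity
    field_simp
    ring
  rw [hmain, hcard, h1p]
  have := aux_central n m hn hm
  constructor
  · calc (1/3) * Real.sqrt ((n:ℝ)/(m*(m+n))) ≤
        ((m+n-1).choose m : ℝ) * ((n:ℝ)/(m+n))^n * ((m:ℝ)/(m+n))^m := this.1
      _ = ((m+n-1).choose m : ℝ) * (((n:ℝ)/(m+n))^n * ((m:ℝ)/(m+n))^m) := by ring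
  · calc ((m+n-1).choose m : ℝ) * (((n:ℝ)/(m+n))^n * ((m:ℝ)/(m+n))^m) =
        ((m+n-1).choose m : ℝ) * ((n:ℝ)/(m+n))^n * ((m:ℝ)/(m+n))^m := by ring
      _ ≤ (1/2) * Real.sqrt ((n:ℝ)/(m*(m+n))) := this.2
end

section
/- For any positive integers M and N, (1/3)·√((M+N)/(MN)) · (M+N)^{M+N}/(M^M · N^N) ≤ C(M+N, M) ≤ (1/2)·√((M+N)/(MN)) · (M+N)^{M+N}/(M^M · N^N), where C(M+N, M) denotes the binomial coefficient. -/
open Real Stirling in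
private lemma stirling_ge_sqrt_pi (n : ℕ) (hn : 0 < n) : Real.sqrt π ≤ stirlingSeq n := by
  obtain ⟨m, rfl⟩ := Nat.exists_eq_succ_of_ne_zero hn.ne'
  exact stirlingSeq'_antitone.le_of_tendsto
    (tendsto_stirlingSeq_sqrt_pi.comp (Filter.tendsto_add_atTop_nat 1)) m

open Real Stirling in
private lemma stirling_le_e_div_sqrt_two (n : ℕ) (hn : 0 < n) :
    stirlingSeq n ≤ Real.exp 1 / Real.sqrt 2 := by
  obtain ⟨m, rfl⟩ := Nat.exists_eq_succ_of_ne_zero hn.ne'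
  rw [← stirlingSeq_one]
  exact stirlingSeq'_antitone (Nat.zero_le m)

open Real Stirling in
private lemma fact_bounds (n : ℕ) (hn : 0 < n) :
    Real.sqrt π * (Real.sqrt (2*n) * ((n:ℝ) / Real.exp 1)^n) ≤ (n.factorial : ℝ) ∧
    (n.factorial : ℝ) ≤ (Real.exp 1 / Real.sqrt 2) *
      (Real.sqrt (2*n) * ((n:ℝ) / Real.exp 1)^n) := by
  have heq : (n.factorial : ℝ) = stirlingSeq n * (Real.sqrt (2*n) * ((n:ℝ) / Real.exp 1)^n) := by
    rw [stirlingSeq]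
    have h : Real.sqrt (2*n) * ((n:ℝ) / Real.exp 1)^n ≠ 0 := by positivity
    field_simp
  have hpos : (0:ℝ) ≤ Real.sqrt (2*n) * ((n:ℝ) / Real.exp 1)^n := by positivity
  constructor
  · rw [heq]
    exact mul_le_mul_of_nonneg_right (stirling_ge_sqrt_pi n hn) hpos
  · rw [heq]
    exact mul_le_mul_of_nonneg_right (stirling_le_e_div_sqrt_two n hn) hpos

private lemma key_identity (x y : ℝ) (hx : 0 < x) (hy : 0 < y) (m n : ℕ) :
    Real.sqrt (2*(x+y)) * ((x+y) / Real.exp 1)^(m+n)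
    = (Real.sqrt (2*x) * (x / Real.exp 1)^m) * (Real.sqrt (2*y) * (y / Real.exp 1)^n)
      * ((1/Real.sqrt 2) * Real.sqrt ((x+y)/(x*y)) * ((x+y)^(m+n)/(x^m*y^n))) := by
  have hxy : 0 < x + y := by linarith
  rw [Real.sqrt_mul (by norm_num : (0:ℝ) ≤ 2), Real.sqrt_mul (by norm_num : (0:ℝ) ≤ 2),
    Real.sqrt_mul (by norm_num : (0:ℝ) ≤ 2),
    Real.sqrt_div hxy.le, Real.sqrt_mul hx.le]
  have h2 : Real.sqrt 2 ≠ 0 := by positivity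
  have hsx : Real.sqrt x ≠ 0 := by positivity
  have hsy : Real.sqrt y ≠ 0 := by positivity
  have he : Real.exp 1 ≠ 0 := (Real.exp_pos 1).ne'
  have hx0 : x ≠ 0 := hx.ne'
  have hy0 : y ≠ 0 := hy.ne'
  rw [div_pow, div_pow, div_pow, pow_add (Real.exp 1)]
  field_simp

private lemma numeric_lower : Real.exp 1 ^ 2 / 3 ≤ Real.sqrt (2*Real.pi) := by
  rw [Real.le_sqrt (by positivity)]
  have h1 := Real.exp_one_lt_d9
  have h2 := Real.pi_gt_d6
  have h3 : Real.exp 1 ^ 2 < 7.3890561 := by nlinarith [Real.exp_pos 1]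
  nlinarith
  positivity

/-- Proposition 11: for positive integers `M, N`,
`(1/3)√((M+N)/(MN)) (M+N)^(M+N)/(M^M N^N) ≤ C(M+N, M) ≤ (1/2)√((M+N)/(MN)) (M+N)^(M+N)/(M^M N^N)`. -/
theorem binomial_coefficient_estimate (M N : ℕ) (hM : 0 < M) (hN : 0 < N) :
    (1 / 3) * Real.sqrt (((M : ℝ) + N) / (M * N)) *
        (((M : ℝ) + N) ^ (M + N) / ((M : ℝ) ^ M * (N : ℝ) ^ N)) ≤
      (Nat.choose (M + N) M : ℝ) ∧
    (Nat.choose (M + N) M : ℝ) ≤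
      (1 / 2) * Real.sqrt (((M : ℝ) + N) / (M * N)) *
        (((M : ℝ) + N) ^ (M + N) / ((M : ℝ) ^ M * (N : ℝ) ^ N)) := by
  have hM' : (0:ℝ) < M := Nat.cast_pos.mpr hM
  have hN' : (0:ℝ) < N := Nat.cast_pos.mpr hN
  set s := Real.sqrt (((M : ℝ) + N) / (M * N)) with hs
  set r := ((M : ℝ) + N) ^ (M + N) / ((M : ℝ) ^ M * (N : ℝ) ^ N) with hr
  set dm := Real.sqrt (2*(M:ℝ)) * ((M:ℝ) / Real.exp 1)^M with hdm
  set dn := Real.sqrt (2*(N:ℝ)) * ((N:ℝ) / Real.exp 1)^N with hdn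
  set dk := Real.sqrt (2*((M:ℝ)+N)) * (((M:ℝ)+N) / Real.exp 1)^(M+N) with hdk
  have fm := fact_bounds M hM
  have fn := fact_bounds N hN
  have fk := fact_bounds (M+N) (by omega)
  rw [show ((M+N:ℕ):ℝ) = (M:ℝ)+N from by push_cast; ring] at fk
  have key := key_identity (M:ℝ) (N:ℝ) hM' hN' M N
  rw [← hdm, ← hdn, ← hdk, ← hs, ← hr] at key
  have hden : (0:ℝ) < (M.factorial : ℝ) * (N.factorial : ℝ) := by positivity
  have hfact : (Nat.choose (M+N) M : ℝ) * ((M.factorial:ℝ) * N.factorial)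
      = ((M+N).factorial : ℝ) := by
    have h := Nat.choose_mul_factorial_mul_factorial (Nat.le_add_right M N)
    rw [Nat.add_sub_cancel_left] at h
    push_cast [← h]; ring
  have hCeq : (Nat.choose (M+N) M : ℝ) = ((M+N).factorial : ℝ) / ((M.factorial:ℝ) * N.factorial) :=
    (eq_div_iff hden.ne').mpr hfact
  have hss : Real.sqrt 2 * Real.sqrt 2 = 2 := Real.mul_self_sqrt (by norm_num)
  have hpp : Real.sqrt Real.pi * Real.sqrt Real.pi = Real.pi :=
    Real.mul_self_sqrt Real.pi_pos.le
  have hdm_pos : 0 < dm := by rw [hdm]; positivity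
  have hdn_pos : 0 < dn := by rw [hdn]; positivity
  have hs_pos : 0 ≤ s := Real.sqrt_nonneg _
  have hr_pos : 0 < r := by rw [hr]; positivity
  have he_pos := Real.exp_pos 1
  have he_le_pi : Real.exp 1 ≤ Real.pi := by
    have h1 := Real.exp_one_lt_d9
    have h2 := Real.pi_gt_d6
    linarith
  constructor
  · -- lower bound
    rw [hCeq, le_div_iff₀ hden]
    have hscalar : (1/3) * ((Real.exp 1 / Real.sqrt 2) * (Real.exp 1 / Real.sqrt 2))
        ≤ Real.sqrt Real.pi * (1 / Real.sqrt 2) := by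
      have hs2 : (0:ℝ) < Real.sqrt 2 := by positivity
      rw [div_mul_div_comm]
      rw [hss]
      rw [show (1:ℝ)/3 * (Real.exp 1 * Real.exp 1 / 2) = (Real.exp 1 * Real.exp 1)/6 from by
        ring, mul_one_div, div_le_div_iff₀ (by norm_num) hs2]
      have hA := numeric_lower
      rw [Real.sqrt_mul (by norm_num : (0:ℝ) ≤ 2) Real.pi] at hA
      nlinarith [mul_nonneg (sub_nonneg.mpr hA) hs2.le, Real.sqrt_nonneg Real.pi]
    calc (1/3) * s * r * ((M.factorial:ℝ) * N.factorial)
        ≤ (1/3) * s * r * (((Real.exp 1 / Real.sqrt 2) * dm) *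
            ((Real.exp 1 / Real.sqrt 2) * dn)) := by
          apply mul_le_mul_of_nonneg_left _ (by positivity)
          exact mul_le_mul fm.2 fn.2 (Nat.cast_nonneg _) (by positivity)
      _ = ((1/3) * ((Real.exp 1 / Real.sqrt 2) * (Real.exp 1 / Real.sqrt 2)))
            * (s * r * (dm * dn)) := by ring
      _ ≤ (Real.sqrt Real.pi * (1 / Real.sqrt 2)) * (s * r * (dm * dn)) := by
          apply mul_le_mul_of_nonneg_right hscalar (by positivity)
      _ = Real.sqrt Real.pi * (dm * dn * ((1/Real.sqrt 2) * s * r)) := by ring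
      _ = Real.sqrt Real.pi * dk := by rw [key]
      _ ≤ ((M+N).factorial : ℝ) := fk.1
  · -- upper bound
    rw [hCeq, div_le_iff₀ hden]
    calc ((M+N).factorial : ℝ)
        ≤ (Real.exp 1 / Real.sqrt 2) * dk := fk.2
      _ = ((Real.exp 1 / Real.sqrt 2) * (1/Real.sqrt 2)) * (s * r * (dm * dn)) := by
          rw [key]; ring
      _ = (Real.exp 1 / 2) * (s * r * (dm * dn)) := by
          rw [div_mul_div_comm, mul_one, hss]
      _ ≤ (Real.pi / 2) * (s * r * (dm * dn)) := by
          apply mul_le_mul_of_nonneg_right _ (by positivity)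
          linarith
      _ = (1/2) * s * r * ((Real.sqrt Real.pi * dm) * (Real.sqrt Real.pi * dn)) := by
          rw [show (Real.sqrt Real.pi * dm) * (Real.sqrt Real.pi * dn)
              = (Real.sqrt Real.pi * Real.sqrt Real.pi) * (dm * dn) from by ring, hpp]
          ring
      _ ≤ (1/2) * s * r * ((M.factorial:ℝ) * N.factorial) := by
          apply mul_le_mul_of_nonneg_left _ (by positivity)
          exact mul_le_mul fm.1 fn.1 (by positivity) (Nat.cast_nonneg _)
end
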